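/- The family L₂ belongs to the class 1N; that is, there exists a polynomial-size family of 1nfa's over {0,1,#} that solves L₂. -/

import Mathlib

/-! ## One-way nondeterministic finite automata -/

structure OneNFA (α : Type) : Type 1 where
  Q : Type
  [finQ : Fintype Q]
  start : Q
  next : Q → α → Set Q
  next_nonempty : ∀ q a, (next q a).Nonempty
  acc : Set Q

attribute [instance] OneNFA.finQ

namespace OneNFA

variable {α : Type}

/-- The state complexity (number of inner states). -/
def sc (M : OneNFA α) : ℕ := Fintype.card M.Q

/-- `p` is a computation path of `M` on input `x`. -/
def IsPath (M : OneNFA α) (x : List α) (p : Fin (x.length + 1) → M.Q) : Prop :=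
  p 0 = M.start ∧ ∀ i : Fin x.length, p i.succ ∈ M.next (p i.castSucc) (x.get i)

/-- `p` is an accepting computation path of `M` on input `x`. -/
def IsAccPath (M : OneNFA α) (x : List α) (p : Fin (x.length + 1) → M.Q) : Prop :=
  M.IsPath x p ∧ p (Fin.last x.length) ∈ M.acc

def Accepts (M : OneNFA α) (x : List α) : Prop := ∃ p, M.IsAccPath x p

/-- `M` is a 1dfa: every transition set is a singleton. -/
def Deterministic (M : OneNFA α) : Prop := ∀ q a, ∃ q', M.next q a = {q'}

end OneNFA

/-! ## Families of promise problems -/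

structure PromiseFamily (α : Type) where
  pos : ℕ → Set (List α)
  neg : ℕ → Set (List α)
  disj : ∀ n, Disjoint (pos n) (neg n)

namespace PromiseFamily

def valid {α : Type} (L : PromiseFamily α) (n : ℕ) : Set (List α) := L.pos n ∪ L.neg n

def co {α : Type} (L : PromiseFamily α) : PromiseFamily α :=
  ⟨L.neg, L.pos, fun n => (L.disj n).symm⟩

end PromiseFamily

/-- A family of promise problems over some finite alphabet. -/
structure Family : Type 1 where
  alph : Type
  [finA : Fintype alph]
  prob : PromiseFamily alph

attribute [instance] Family.finA

def Family.co (F : Family) : Family := { alph := F.alph, prob := F.prob.co }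

/-! ## One-way machine families -/

def Solves1 {α : Type} (M : ℕ → OneNFA α) (L : PromiseFamily α) : Prop :=
  ∀ n, (∀ x ∈ L.pos n, (M n).Accepts x) ∧ (∀ x ∈ L.neg n, ¬ (M n).Accepts x)

def PolySize1 {α : Type} (M : ℕ → OneNFA α) : Prop :=
  ∃ p : Polynomial ℕ, ∀ n, (M n).sc ≤ p.eval n

def Unambiguous1 {α : Type} (M : ℕ → OneNFA α) (L : PromiseFamily α) : Prop :=
  ∀ n, ∀ x ∈ L.valid n, {p | (M n).IsAccPath x p}.Subsingleton

def AcceptFew1 {α : Type} (M : ℕ → OneNFA α) (L : PromiseFamily α) : Prop :=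
  ∃ P : MvPolynomial (Fin 2) ℕ, ∀ n, ∀ x ∈ L.valid n,
    {p | (M n).IsAccPath x p}.ncard ≤ MvPolynomial.eval ![n, x.length] P

def WeaklyUnambiguous1 {α : Type} (M : ℕ → OneNFA α) (L : PromiseFamily α) : Prop :=
  ∀ n, ∀ x ∈ L.valid n, ∀ q : (M n).Q,
    {p | (M n).IsAccPath x p ∧ p (Fin.last x.length) = q}.Subsingleton

def ReachUnambiguous1 {α : Type} (M : ℕ → OneNFA α) (L : PromiseFamily α) : Prop :=
  ∀ n, ∀ x ∈ L.valid n, ∀ i ≤ x.length, ∀ q : (M n).Q,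
    {p : Fin ((x.take i).length + 1) → (M n).Q |
      (M n).IsPath (x.take i) p ∧ p (Fin.last (x.take i).length) = q}.Subsingleton

def ReachFew1 {α : Type} (M : ℕ → OneNFA α) (L : PromiseFamily α) : Prop :=
  ∃ P : MvPolynomial (Fin 2) ℕ, ∀ n, ∀ x ∈ L.valid n, ∀ i ≤ x.length, ∀ q : (M n).Q,
    {p : Fin ((x.take i).length + 1) → (M n).Q |
      (M n).IsPath (x.take i) p ∧ p (Fin.last (x.take i).length) = q}.ncard ≤
      MvPolynomial.eval ![n, x.length] P

/-! ## One-way nonuniform state complexity classes -/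

def oneN : Set Family :=
  {F | ∃ M : ℕ → OneNFA F.alph, PolySize1 M ∧ Solves1 M F.prob}

def oneD : Set Family :=
  {F | ∃ M : ℕ → OneNFA F.alph, PolySize1 M ∧ (∀ n, (M n).Deterministic) ∧ Solves1 M F.prob}

def oneU : Set Family :=
  {F | ∃ M : ℕ → OneNFA F.alph, PolySize1 M ∧ Unambiguous1 M F.prob ∧ Solves1 M F.prob}

def oneFew : Set Family :=
  {F | ∃ M : ℕ → OneNFA F.alph, PolySize1 M ∧ AcceptFew1 M F.prob ∧ Solves1 M F.prob}

def oneFewU : Set Family :=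
  {F | ∃ M : ℕ → OneNFA F.alph, PolySize1 M ∧ AcceptFew1 M F.prob ∧
        WeaklyUnambiguous1 M F.prob ∧ Solves1 M F.prob}

def oneReachU : Set Family :=
  {F | ∃ M : ℕ → OneNFA F.alph, PolySize1 M ∧ AcceptFew1 M F.prob ∧
        ReachUnambiguous1 M F.prob ∧ Solves1 M F.prob}

def oneReachFew : Set Family :=
  {F | ∃ M : ℕ → OneNFA F.alph, PolySize1 M ∧ AcceptFew1 M F.prob ∧
        ReachFew1 M F.prob ∧ Solves1 M F.prob}

def oneReachFewU : Set Family :=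
  {F | ∃ M : ℕ → OneNFA F.alph, PolySize1 M ∧ AcceptFew1 M F.prob ∧
        ReachFew1 M F.prob ∧ WeaklyUnambiguous1 M F.prob ∧ Solves1 M F.prob}

/-- The complement class `co-C`. -/
def coC (C : Set Family) : Set Family := {F | F.co ∈ C}
/-! ## Two-way nondeterministic finite automata -/

/-- A tape symbol: either an input symbol, the left endmarker `Sum.inr false`,
or the right endmarker `Sum.inr true`. -/
def TapeSym (α : Type) : Type := α ⊕ Bool

/-- The symbol held in cell `i` of the tape containing `▷x◁`. -/
def tapeAt {α : Type} (x : List α) (i : ℕ) : TapeSym α :=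
  if h0 : i = 0 then Sum.inr false
  else if h : i ≤ x.length then Sum.inl (x.get ⟨i - 1, by omega⟩)
  else Sum.inr true

structure TwoNFA (α : Type) : Type 1 where
  Q : Type
  [finQ : Fintype Q]
  start : Q
  acc : Set Q
  rej : Set Q
  acc_rej_disj : Disjoint acc rej
  next : Q → TapeSym α → Set (Q × ℤ)
  next_dir : ∀ q a t, t ∈ next q a → t.2 = -1 ∨ t.2 = 0 ∨ t.2 = 1

attribute [instance] TwoNFA.finQ

namespace TwoNFA

variable {α : Type}

def sc (M : TwoNFA α) : ℕ := Fintype.card M.Q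

def Halting (M : TwoNFA α) (q : M.Q) : Prop := q ∈ M.acc ∨ q ∈ M.rej

/-- Configuration `c` yields configuration `c'` in one step on input `x`. -/
def Yields (M : TwoNFA α) (x : List α) (c c' : M.Q × ℕ) : Prop :=
  ¬ M.Halting c.1 ∧ c.2 ≤ x.length + 1 ∧ c'.2 ≤ x.length + 1 ∧
    ∃ d : ℤ, (c'.1, d) ∈ M.next c.1 (tapeAt x c.2) ∧ (c'.2 : ℤ) = (c.2 : ℤ) + d

/-- A partial computation path of length `k` of `M` on `x`. -/
def IsPartialPath (M : TwoNFA α) (x : List α) (k : ℕ) (p : Fin (k + 1) → M.Q × ℕ) : Prop :=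
  p 0 = (M.start, 0) ∧ ∀ i : Fin k, M.Yields x (p i.castSucc) (p i.succ)

/-- A (full) computation path: the final configuration is the only halting one. -/
def IsCompPath (M : TwoNFA α) (x : List α) (k : ℕ) (p : Fin (k + 1) → M.Q × ℕ) : Prop :=
  M.IsPartialPath x k p ∧ ∀ i : Fin (k + 1), (M.Halting (p i).1 ↔ i = Fin.last k)

def IsAccPath (M : TwoNFA α) (x : List α) (k : ℕ) (p : Fin (k + 1) → M.Q × ℕ) : Prop :=
  M.IsCompPath x k p ∧ (p (Fin.last k)).1 ∈ M.acc

def Accepts (M : TwoNFA α) (x : List α) : Prop := ∃ k p, M.IsAccPath x k p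

def Deterministic (M : TwoNFA α) : Prop := ∀ q a, ∃ t, M.next q a = {t}

/-- The set of accepting computation paths of `M` on `x`. -/
def accPaths (M : TwoNFA α) (x : List α) : Set ((k : ℕ) × (Fin (k + 1) → M.Q × ℕ)) :=
  {kp | M.IsAccPath x kp.1 kp.2}

/-- The set of computation paths of `M` on `x` ending at configuration `conf`. -/
def compPathsTo (M : TwoNFA α) (x : List α) (conf : M.Q × ℕ) :
    Set ((k : ℕ) × (Fin (k + 1) → M.Q × ℕ)) :=
  {kp | M.IsCompPath x kp.1 kp.2 ∧ kp.2 (Fin.last kp.1) = conf}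

/-- The set of partial computation paths of `M` on `x` ending at configuration `conf`. -/
def partialPathsTo (M : TwoNFA α) (x : List α) (conf : M.Q × ℕ) :
    Set ((k : ℕ) × (Fin (k + 1) → M.Q × ℕ)) :=
  {kp | M.IsPartialPath x kp.1 kp.2 ∧ kp.2 (Fin.last kp.1) = conf}

end TwoNFA

/-! ## Two-way machine families -/

def Solves2 {α : Type} (M : ℕ → TwoNFA α) (L : PromiseFamily α) : Prop :=
  ∀ n, (∀ x ∈ L.pos n, (M n).Accepts x) ∧ (∀ x ∈ L.neg n, ¬ (M n).Accepts x)

def PolySize2 {α : Type} (M : ℕ → TwoNFA α) : Prop :=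
  ∃ p : Polynomial ℕ, ∀ n, (M n).sc ≤ p.eval n

def Unambiguous2 {α : Type} (M : ℕ → TwoNFA α) (L : PromiseFamily α) : Prop :=
  ∀ n, ∀ x ∈ L.valid n, ((M n).accPaths x).Subsingleton

def AcceptFew2 {α : Type} (M : ℕ → TwoNFA α) (L : PromiseFamily α) : Prop :=
  ∃ P : MvPolynomial (Fin 2) ℕ, ∀ n, ∀ x ∈ L.valid n,
    ((M n).accPaths x).encard ≤ (MvPolynomial.eval ![n, x.length] P : ℕ∞)

def WeaklyUnambiguous2 {α : Type} (M : ℕ → TwoNFA α) (L : PromiseFamily α) : Prop :=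
  ∀ n, ∀ x ∈ L.valid n, ∀ conf : (M n).Q × ℕ, conf.1 ∈ (M n).acc →
    ((M n).compPathsTo x conf).Subsingleton

def ReachUnambiguous2 {α : Type} (M : ℕ → TwoNFA α) (L : PromiseFamily α) : Prop :=
  ∀ n, ∀ x ∈ L.valid n, ∀ conf : (M n).Q × ℕ,
    ((M n).partialPathsTo x conf).Subsingleton

def ReachFew2 {α : Type} (M : ℕ → TwoNFA α) (L : PromiseFamily α) : Prop :=
  ∃ P : MvPolynomial (Fin 2) ℕ, ∀ n, ∀ x ∈ L.valid n, ∀ conf : (M n).Q × ℕ,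
    ((M n).partialPathsTo x conf).encard ≤ (MvPolynomial.eval ![n, x.length] P : ℕ∞)

/-! ## Two-way nonuniform state complexity classes -/

def twoN : Set Family :=
  {F | ∃ M : ℕ → TwoNFA F.alph, PolySize2 M ∧ Solves2 M F.prob}

def twoD : Set Family :=
  {F | ∃ M : ℕ → TwoNFA F.alph, PolySize2 M ∧ (∀ n, (M n).Deterministic) ∧ Solves2 M F.prob}

def twoU : Set Family :=
  {F | ∃ M : ℕ → TwoNFA F.alph, PolySize2 M ∧ Unambiguous2 M F.prob ∧ Solves2 M F.prob}

def twoFew : Set Family :=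
  {F | ∃ M : ℕ → TwoNFA F.alph, PolySize2 M ∧ AcceptFew2 M F.prob ∧ Solves2 M F.prob}

def twoFewU : Set Family :=
  {F | ∃ M : ℕ → TwoNFA F.alph, PolySize2 M ∧ AcceptFew2 M F.prob ∧
        WeaklyUnambiguous2 M F.prob ∧ Solves2 M F.prob}

def twoReachU : Set Family :=
  {F | ∃ M : ℕ → TwoNFA F.alph, PolySize2 M ∧ AcceptFew2 M F.prob ∧
        ReachUnambiguous2 M F.prob ∧ Solves2 M F.prob}

def twoReachFew : Set Family :=
  {F | ∃ M : ℕ → TwoNFA F.alph, PolySize2 M ∧ AcceptFew2 M F.prob ∧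
        ReachFew2 M F.prob ∧ Solves2 M F.prob}

def twoReachFewU : Set Family :=
  {F | ∃ M : ℕ → TwoNFA F.alph, PolySize2 M ∧ AcceptFew2 M F.prob ∧
        ReachFew2 M F.prob ∧ WeaklyUnambiguous2 M F.prob ∧ Solves2 M F.prob}

/-! ## Ceilings -/

/-- The family `F` has an `f(n)`-ceiling. -/
def HasCeiling (F : Family) (f : ℕ → ℕ) : Prop :=
  ∀ n, ∀ x ∈ F.prob.valid n, x.length ≤ f n

/-- The restriction `C/F` of a class `C` to families having an `f`-ceiling for some `f ∈ S`. -/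
def ceil (C : Set Family) (S : Set (ℕ → ℕ)) : Set Family :=
  {F | F ∈ C ∧ ∃ f ∈ S, HasCeiling F f}

def polyFuns : Set (ℕ → ℕ) := {f | ∃ p : Polynomial ℕ, ∀ n, f n = p.eval n}

/-- Super-exponential functions: `f(n) > 2^{p(n)}` for all but finitely many `n`,
for every polynomial `p`. -/
def supexpFuns : Set (ℕ → ℕ) :=
  {f | ∀ p : Polynomial ℕ, ∃ N, ∀ n ≥ N, 2 ^ p.eval n < f n}

/-- `F` has a logarithmic ceiling `ℓ(n) = a·log₂ n + b` with constants `a, b ≥ 0`. -/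
def HasLogCeiling (F : Family) : Prop :=
  ∃ a b : ℝ, 0 ≤ a ∧ 0 ≤ b ∧
    ∀ n, ∀ x ∈ F.prob.valid n, (x.length : ℝ) ≤ a * Real.logb 2 n + b

/-- The restriction `C/log` of a class `C` to families having logarithmic ceilings. -/
def ceilLog (C : Set Family) : Set Family := {F | F ∈ C ∧ HasLogCeiling F}
/-! ## The alphabet `{0, 1, #}` and encodings -/

inductive Sym3 : Type
  | zero | one | hash
deriving DecidableEq

instance : Fintype Sym3 :=
  ⟨{Sym3.zero, Sym3.one, Sym3.hash}, by intro x; cases x <;> simp⟩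

/-- The block `1^i 0^{m-i}`. -/
def block (m i : ℕ) : List Sym3 :=
  List.replicate i Sym3.one ++ List.replicate (m - i) Sym3.zero

lemma block_length {m i : ℕ} (h : i ≤ m) : (block m i).length = m := by
  simp [block]; omega

lemma block_count {m : ℕ} (i : ℕ) : (block m i).count Sym3.one = i := by
  simp [block, List.count_append, List.count_replicate]

lemma block_inj {m i j : ℕ} (h : block m i = block m j) : i = j := by
  have := block_count (m := m) i
  rw [h, block_count] at this
  omega

/-- The encoding `[[i₁,…,i_k]]_m` of a list of numbers. -/
def enc (m : ℕ) : List ℕ → List Sym3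
  | [] => []
  | [i] => block m i
  | i :: j :: rest => block m i ++ Sym3.zero :: enc m (j :: rest)

/-- Lists of length `k` with entries in `[n]`. -/
def ValidList (n k : ℕ) (l : List ℕ) : Prop :=
  l.length = k ∧ ∀ i ∈ l, 1 ≤ i ∧ i ≤ n

lemma enc_length {m : ℕ} :
    ∀ l : List ℕ, (∀ i ∈ l, i ≤ m) → (enc m l).length = l.length * (m + 1) - 1
  | [] => by simp [enc]
  | [i] => by
      intro h
      simp [enc, block_length (h i (by simp))]
  | i :: j :: rest => by
      intro h
      have ih := enc_length (j :: rest) (fun a ha => h a (List.mem_cons_of_mem _ ha))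
      have hb : (block m i).length = m := block_length (h i List.mem_cons_self)
      show (block m i ++ Sym3.zero :: enc m (j :: rest)).length = _
      rw [List.length_append, hb, List.length_cons, ih]
      have hc : (i :: j :: rest).length = (j :: rest).length + 1 := by simp
      rw [hc]
      set L := (j :: rest).length with hLdef
      have hL : 1 ≤ L := by simp [hLdef]
      have h1 : (L + 1) * (m + 1) = L * (m + 1) + (m + 1) := by ring
      rw [h1]
      set P := L * (m + 1) with hPdef
      have hP : 1 ≤ P := by
        have := Nat.mul_le_mul hL (Nat.le_add_left 1 m)
        simpa [hPdef] using this
      omega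

lemma enc_ne_nil {m : ℕ} (i : ℕ) (rest : List ℕ) (hi : 1 ≤ i) :
    enc m (i :: rest) ≠ [] := by
  cases rest with
  | nil =>
      simp only [enc, block]
      intro h
      have := congrArg List.length h
      simp at this
      omega
  | cons j rest' =>
      simp only [enc]
      intro h
      have := congrArg List.length h
      simp at this

lemma enc_inj {m : ℕ} :
    ∀ u w : List ℕ, (∀ i ∈ u, 1 ≤ i ∧ i ≤ m) → (∀ i ∈ w, 1 ≤ i ∧ i ≤ m) →
      enc m u = enc m w → u = w
  | [], [], _, _, _ => rfl
  | [], j :: w', _, hw, h => by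
      exact absurd h.symm (enc_ne_nil j w' (hw j (by simp)).1)
  | i :: u', [], hu, _, h => by
      exact absurd h (enc_ne_nil i u' (hu i (by simp)).1)
  | [i], [j], hu, hw, h => by
      simp only [enc] at h
      rw [block_inj h]
  | [i], j :: b :: w', hu, hw, h => by
      exfalso
      have hl := congrArg List.length h
      rw [show enc m [i] = block m i from rfl,
        show enc m (j :: b :: w') = block m j ++ Sym3.zero :: enc m (b :: w') from rfl] at hl
      rw [List.length_append, List.length_cons,
        block_length (hu i (by simp)).2, block_length (hw j (by simp)).2] at hl
      omega
  | i :: a :: u', [j], hu, hw, h => by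
      exfalso
      have hl := congrArg List.length h
      rw [show enc m [j] = block m j from rfl,
        show enc m (i :: a :: u') = block m i ++ Sym3.zero :: enc m (a :: u') from rfl] at hl
      rw [List.length_append, List.length_cons,
        block_length (hu i (by simp)).2, block_length (hw j (by simp)).2] at hl
      omega
  | i :: a :: u', j :: b :: w', hu, hw, h => by
      rw [show enc m (i :: a :: u') = block m i ++ Sym3.zero :: enc m (a :: u') from rfl,
        show enc m (j :: b :: w') = block m j ++ Sym3.zero :: enc m (b :: w') from rfl] at h
      have hlen : (block m i).length = (block m j).length := by
        rw [block_length (hu i (by simp)).2, block_length (hw j (by simp)).2]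
      obtain ⟨h1, h2⟩ := List.append_inj h hlen
      have h3 : enc m (a :: u') = enc m (b :: w') := by
        simpa using h2
      have ih := enc_inj (a :: u') (b :: w')
        (fun x hx => hu x (List.mem_cons_of_mem _ hx))
        (fun x hx => hw x (List.mem_cons_of_mem _ hx)) h3
      rw [block_inj h1, ih]
/-! ## The promise problem family `L₁` -/

def L1pos (n : ℕ) : Set (List Sym3) :=
  {x | ∃ u v : List ℕ, ValidList n n u ∧ ValidList n n v ∧ u ≠ v ∧
        x = enc n u ++ Sym3.hash :: enc n v}

def L1neg (n : ℕ) : Set (List Sym3) :=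
  {x | ∃ u v : List ℕ, ValidList n n u ∧ ValidList n n v ∧ u = v ∧
        x = enc n u ++ Sym3.hash :: enc n v}

lemma L1_disj (n : ℕ) : Disjoint (L1pos n) (L1neg n) := by
  rw [Set.disjoint_left]
  rintro x ⟨u, v, hu, hv, huv, rfl⟩ ⟨u', v', hu', hv', huv', heq⟩
  have hlen : (enc n u).length = (enc n u').length := by
    rw [enc_length u (fun i hi => (hu.2 i hi).2),
      enc_length u' (fun i hi => (hu'.2 i hi).2), hu.1, hu'.1]
  obtain ⟨h1, h2⟩ := List.append_inj heq hlen
  have h2' : enc n v = enc n v' := by simpa using h2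
  have e1 : u = u' := enc_inj u u' hu.2 hu'.2 h1
  have e2 : v = v' := enc_inj v v' hv.2 hv'.2 h2'
  exact huv (by rw [e1, e2, huv'])

def L1prob : PromiseFamily Sym3 := ⟨L1pos, L1neg, L1_disj⟩

def L1fam : Family := { alph := Sym3, prob := L1prob }

/-! ## Matrices, their encodings, and the promise problem family `L₂` -/

/-- `R` represents an `n × n` matrix with entries in `[n]`, given as its list of rows. -/
def ValidMat (n : ℕ) (R : List (List ℕ)) : Prop :=
  R.length = n ∧ ∀ r ∈ R, ValidList n n r

/-- The encoding `[[D]]_n` of a matrix: its encoded rows joined by `#`. -/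
def encMat (n : ℕ) : List (List ℕ) → List Sym3
  | [] => []
  | [r] => enc n r
  | r :: s :: rest => enc n r ++ Sym3.hash :: encMat n (s :: rest)

lemma encMat_len {n : ℕ} :
    ∀ R : List (List ℕ), (∀ r ∈ R, ValidList n n r) →
      (encMat n R).length = R.length * (n * (n + 1) - 1 + 1) - 1
  | [] => by simp [encMat]
  | [r] => by
      intro h
      have hr := h r (by simp)
      have he : (enc n r).length = n * (n + 1) - 1 := by
        rw [enc_length r (fun i hi => (hr.2 i hi).2), hr.1]
      show (enc n r).length = ([r] : List (List ℕ)).length * (n * (n + 1) - 1 + 1) - 1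
      rw [he, show ([r] : List (List ℕ)).length = 1 from rfl]
      omega
  | r :: s :: rest => by
      intro h
      have ih := encMat_len (s :: rest) (fun a ha => h a (List.mem_cons_of_mem _ ha))
      have hr := h r (by simp)
      have he : (enc n r).length = n * (n + 1) - 1 := by
        rw [enc_length r (fun i hi => (hr.2 i hi).2), hr.1]
      show (enc n r ++ Sym3.hash :: encMat n (s :: rest)).length = _
      rw [List.length_append, he, List.length_cons, ih]
      have hc : (r :: s :: rest).length = (s :: rest).length + 1 := by simp
      rw [hc]
      set e := n * (n + 1) - 1 with hedef
      set L := (s :: rest).length with hLdef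
      have hL : 1 ≤ L := by simp [hLdef]
      have h1 : (L + 1) * (e + 1) = L * (e + 1) + (e + 1) := by ring
      rw [h1]
      set P := L * (e + 1) with hPdef
      have hP : 1 ≤ P := by
        calc 1 = 1 * 1 := by ring
        _ ≤ L * (e + 1) := Nat.mul_le_mul hL (by omega)
      omega

lemma encMat_inj {n : ℕ} :
    ∀ R W : List (List ℕ), (∀ r ∈ R, ValidList n n r) → (∀ r ∈ W, ValidList n n r) →
      R.length = W.length → encMat n R = encMat n W → R = W
  | [], [], _, _, _, _ => rfl
  | [], _ :: _, _, _, hl, _ => by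
      simp only [List.length_cons, List.length_nil] at hl
      omega
  | _ :: _, [], _, _, hl, _ => by
      simp only [List.length_cons, List.length_nil] at hl
      omega
  | [r], [w], hR, hW, _, h => by
      have := enc_inj r w (hR r (by simp)).2 (hW w (by simp)).2 h
      rw [this]
  | [r], w :: w' :: W', _, _, hl, _ => by
      simp only [List.length_cons, List.length_nil] at hl
      omega
  | r :: r' :: R', [w], _, _, hl, _ => by
      simp only [List.length_cons, List.length_nil] at hl
      omega
  | r :: r' :: R', w :: w' :: W', hR, hW, hl, h => by
      rw [show encMat n (r :: r' :: R') = enc n r ++ Sym3.hash :: encMat n (r' :: R') from rfl,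
        show encMat n (w :: w' :: W') = enc n w ++ Sym3.hash :: encMat n (w' :: W') from rfl] at h
      have hrlen : (enc n r).length = (enc n w).length := by
        have h1 := hR r (by simp); have h2 := hW w (by simp)
        rw [enc_length r (fun i hi => (h1.2 i hi).2),
          enc_length w (fun i hi => (h2.2 i hi).2), h1.1, h2.1]
      obtain ⟨h1, h2⟩ := List.append_inj h hrlen
      have h3 : encMat n (r' :: R') = encMat n (w' :: W') := by simpa using h2
      have ihr := enc_inj r w (hR r (by simp)).2 (hW w (by simp)).2 h1
      have ih := encMat_inj (r' :: R') (w' :: W')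
        (fun a ha => hR a (List.mem_cons_of_mem _ ha))
        (fun a ha => hW a (List.mem_cons_of_mem _ ha))
        (by simpa using hl) h3
      rw [ihr, ih]

/-- `SelSum R s` holds iff `s` is obtained by choosing one entry from each row of `R`
(the value `sum_D(σ)` for some choice function `σ`). -/
inductive SelSum : List (List ℕ) → ℕ → Prop
  | nil : SelSum [] 0
  | cons {a : ℕ} {r : List ℕ} {rest : List (List ℕ)} {s : ℕ} :
      a ∈ r → SelSum rest s → SelSum (r :: rest) (a + s)

def L2pos (n : ℕ) : Set (List Sym3) :=
  {x | ∃ R R' : List (List ℕ), ValidMat n R ∧ ValidMat n R' ∧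
        (∃ s : ℕ, SelSum R s ∧ SelSum R' s) ∧
        x = encMat n R ++ Sym3.hash :: Sym3.hash :: encMat n R'}

def L2neg (n : ℕ) : Set (List Sym3) :=
  {x | ∃ R R' : List (List ℕ), ValidMat n R ∧ ValidMat n R' ∧
        (∀ s s' : ℕ, SelSum R s → SelSum R' s' → s ≠ s') ∧
        x = encMat n R ++ Sym3.hash :: Sym3.hash :: encMat n R'}

lemma L2_disj (n : ℕ) : Disjoint (L2pos n) (L2neg n) := by
  rw [Set.disjoint_left]
  rintro x ⟨R, R', hR, hR', ⟨s, hs, hs'⟩, rfl⟩ ⟨W, W', hW, hW', hne, heq⟩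
  have hlen : (encMat n R).length = (encMat n W).length := by
    rw [encMat_len R hR.2, encMat_len W hW.2, hR.1, hW.1]
  obtain ⟨h1, h2⟩ := List.append_inj heq hlen
  have h2' : encMat n R' = encMat n W' := by simpa using h2
  have e1 : R = W := encMat_inj R W hR.2 hW.2 (by rw [hR.1, hW.1]) h1
  have e2 : R' = W' := encMat_inj R' W' hR'.2 hW'.2 (by rw [hR'.1, hW'.1]) h2'
  exact hne s s (e1 ▸ hs) (e2 ▸ hs') rfl

def L2prob : PromiseFamily Sym3 := ⟨L2pos, L2neg, L2_disj⟩

def L2fam : Family := { alph := Sym3, prob := L2prob }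
/-! ## One-way probabilistic finite automata data -/

/-- Product of the matrices of the symbols of a word. -/
noncomputable def wordMatrix {α Q : Type} [Fintype Q] [DecidableEq Q]
    (Mσ : TapeSym α → Matrix Q Q ℝ) (w : List (TapeSym α)) : Matrix Q Q ℝ :=
  (w.map Mσ).prod

/-- The tape word `▷ x ◁`. -/
def tapeWord {α : Type} (x : List α) : List (TapeSym α) :=
  Sum.inr false :: (x.map Sum.inl ++ [Sum.inr true])

/-- `p_{acc}(x : q)`: the `q`-entry of the row vector `ν · M_{▷x◁}`. -/
noncomputable def pacc {α Q : Type} [Fintype Q] [DecidableEq Q]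
    (ν : Q → ℝ) (Mσ : TapeSym α → Matrix Q Q ℝ) (x : List α) (q : Q) : ℝ :=
  Matrix.vecMul ν (wordMatrix Mσ (tapeWord x)) q
/-! ## Proof infrastructure for Statement 15 -/

namespace L2pf

variable {α : Type}

/-- Relational reachability for a 1nfa. -/
inductive Reach (M : OneNFA α) : M.Q → List α → M.Q → Prop
  | nil (q : M.Q) : Reach M q [] q
  | cons {q q1 q2 : M.Q} {a : α} {w : List α} :
      q1 ∈ M.next q a → Reach M q1 w q2 → Reach M q (a :: w) q2

lemma reach_nil_iff {M : OneNFA α} {q q' : M.Q} : Reach M q [] q' ↔ q' = q := by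
  constructor
  · intro h; cases h; rfl
  · rintro rfl; exact Reach.nil _

lemma reach_cons_iff {M : OneNFA α} {q q' : M.Q} {a : α} {w : List α} :
    Reach M q (a :: w) q' ↔ ∃ q1 ∈ M.next q a, Reach M q1 w q' := by
  constructor
  · intro h; cases h with
    | cons h1 h2 => exact ⟨_, h1, h2⟩
  · rintro ⟨q1, h1, h2⟩; exact Reach.cons h1 h2

lemma reach_append {M : OneNFA α} {u v : List α} {q q2 : M.Q} :
    Reach M q (u ++ v) q2 ↔ ∃ q1, Reach M q u q1 ∧ Reach M q1 v q2 := by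
  induction u generalizing q with
  | nil =>
      simp only [List.nil_append]
      constructor
      · intro h; exact ⟨q, Reach.nil q, h⟩
      · rintro ⟨q1, h1, h2⟩; rw [reach_nil_iff] at h1; rwa [h1] at h2
  | cons a w ih =>
      simp only [List.cons_append, reach_cons_iff]
      constructor
      · rintro ⟨qa, ha, hr⟩
        obtain ⟨q1, h1, h2⟩ := ih.1 hr
        exact ⟨q1, ⟨qa, ha, h1⟩, h2⟩
      · rintro ⟨q1, ⟨qa, ha, h1⟩, h2⟩
        exact ⟨qa, ha, ih.2 ⟨q1, h1, h2⟩⟩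

lemma exists_path_iff (M : OneNFA α) (x : List α) (q0 qe : M.Q) :
    (∃ p : Fin (x.length + 1) → M.Q, p 0 = q0 ∧
      (∀ i : Fin x.length, p i.succ ∈ M.next (p i.castSucc) (x.get i)) ∧
      p (Fin.last x.length) = qe) ↔ Reach M q0 x qe := by
  induction x generalizing q0 with
  | nil =>
      constructor
      · rintro ⟨p, h0, _, he⟩
        rw [reach_nil_iff]
        rw [← he, ← h0]
        rfl
      · intro h
        rw [reach_nil_iff] at h
        exact ⟨fun _ => q0, rfl, fun i => i.elim0, h.symm⟩
  | cons a w ih =>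
      constructor
      · rintro ⟨p, h0, hstep, he⟩
        have hstep' : ∀ i : Fin (w.length + 1),
            p i.succ ∈ M.next (p i.castSucc) ((a :: w).get i) := hstep
        have h1 : p (Fin.succ (0 : Fin (w.length + 1))) ∈ M.next q0 a := by
          have := hstep' 0
          simpa [h0] using this
        refine Reach.cons h1 ?_
        refine (ih (p (Fin.succ (0 : Fin (w.length + 1))))).1
          ⟨fun i => p i.succ, rfl, ?_, ?_⟩
        · intro i
          have := hstep' i.succ
          simpa only [← Fin.succ_castSucc, List.get_cons_succ'] using this
        · show p ((Fin.last w.length).succ) = qe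
          rw [Fin.succ_last]
          exact he
      · intro h
        rcases reach_cons_iff.1 h with ⟨q1, hm, hr⟩
        obtain ⟨p, h0, hstep, he⟩ := (ih q1).2 hr
        have key : ∀ i : Fin (w.length + 1),
            (Fin.cons q0 p : Fin (w.length + 1 + 1) → M.Q) i.succ ∈
              M.next ((Fin.cons q0 p : Fin (w.length + 1 + 1) → M.Q) i.castSucc)
                ((a :: w).get i) := by
          intro i
          induction i using Fin.cases with
          | zero =>
              simp only [Fin.castSucc_zero, Fin.cons_zero, Fin.cons_succ, List.get_cons_zero]
              rw [h0]
              exact hm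
          | succ j =>
              simp only [← Fin.succ_castSucc, Fin.cons_succ, List.get_cons_succ]
              exact hstep j
        refine ⟨(Fin.cons q0 p : Fin (w.length + 1 + 1) → M.Q), ?_, key, ?_⟩
        · rfl
        show (Fin.cons q0 p : Fin (w.length + 1 + 1) → M.Q) (Fin.last (w.length + 1)) = qe
        rw [← Fin.succ_last, Fin.cons_succ]
        exact he

lemma accepts_iff_reach (M : OneNFA α) (x : List α) :
    M.Accepts x ↔ ∃ qe ∈ M.acc, Reach M M.start x qe := by
  constructor
  · rintro ⟨p, ⟨h0, hstep⟩, hacc⟩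
    exact ⟨p (Fin.last x.length), hacc, (exists_path_iff M x M.start _).1 ⟨p, h0, hstep, rfl⟩⟩
  · rintro ⟨qe, hacc, hr⟩
    obtain ⟨p, h0, hstep, he⟩ := (exists_path_iff M x M.start qe).2 hr
    exact ⟨p, ⟨h0, hstep⟩, he ▸ hacc⟩


/-! ### The counting machine -/

inductive Mode : Type
  | W | S | C | D | H | W2 | S2 | C2 | D2 | H2 | X
deriving DecidableEq

instance : Fintype Mode :=
  ⟨⟨↑[Mode.W, Mode.S, Mode.C, Mode.D, Mode.H, Mode.W2, Mode.S2, Mode.C2, Mode.D2, Mode.H2, Mode.X],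
    by decide⟩, by intro x; cases x <;> decide⟩

abbrev MQ (n : ℕ) : Type := Mode × Fin (n * n + 1)

def up (n : ℕ) (c : Fin (n * n + 1)) : Set (MQ n) :=
  if _ : c.val < n * n then {(Mode.C, ⟨c.val + 1, by omega⟩)} else {(Mode.X, c)}

def dn (n : ℕ) (c : Fin (n * n + 1)) : Set (MQ n) :=
  if _ : 0 < c.val then {(Mode.C2, ⟨c.val - 1, by omega⟩)} else {(Mode.X, c)}

def step (n : ℕ) : MQ n → Sym3 → Set (MQ n)
  | (Mode.W, c), Sym3.zero => {(Mode.W, c)}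
  | (Mode.W, c), Sym3.one => up n c ∪ {(Mode.S, c)}
  | (Mode.W, c), Sym3.hash => {(Mode.X, c)}
  | (Mode.S, c), Sym3.zero => {(Mode.W, c)}
  | (Mode.S, c), Sym3.one => {(Mode.S, c)}
  | (Mode.S, c), Sym3.hash => {(Mode.X, c)}
  | (Mode.C, c), Sym3.zero => {(Mode.D, c)}
  | (Mode.C, c), Sym3.one => up n c
  | (Mode.C, c), Sym3.hash => {(Mode.H, c)}
  | (Mode.D, c), Sym3.zero => {(Mode.D, c)}
  | (Mode.D, c), Sym3.one => {(Mode.D, c)}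
  | (Mode.D, c), Sym3.hash => {(Mode.H, c)}
  | (Mode.H, c), Sym3.zero => {(Mode.X, c)}
  | (Mode.H, c), Sym3.one => up n c ∪ {(Mode.S, c)}
  | (Mode.H, c), Sym3.hash => {(Mode.W2, c)}
  | (Mode.W2, c), Sym3.zero => {(Mode.W2, c)}
  | (Mode.W2, c), Sym3.one => dn n c ∪ {(Mode.S2, c)}
  | (Mode.W2, c), Sym3.hash => {(Mode.X, c)}
  | (Mode.S2, c), Sym3.zero => {(Mode.W2, c)}
  | (Mode.S2, c), Sym3.one => {(Mode.S2, c)}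
  | (Mode.S2, c), Sym3.hash => {(Mode.X, c)}
  | (Mode.C2, c), Sym3.zero => {(Mode.D2, c)}
  | (Mode.C2, c), Sym3.one => dn n c
  | (Mode.C2, c), Sym3.hash => {(Mode.H2, c)}
  | (Mode.D2, c), Sym3.zero => {(Mode.D2, c)}
  | (Mode.D2, c), Sym3.one => {(Mode.D2, c)}
  | (Mode.D2, c), Sym3.hash => {(Mode.H2, c)}
  | (Mode.H2, c), Sym3.zero => {(Mode.X, c)}
  | (Mode.H2, c), Sym3.one => dn n c ∪ {(Mode.S2, c)}
  | (Mode.H2, c), Sym3.hash => {(Mode.X, c)}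
  | (Mode.X, c), _ => {(Mode.X, c)}

lemma up_nonempty (n : ℕ) (c : Fin (n * n + 1)) : (up n c).Nonempty := by
  unfold up; split <;> exact ⟨_, rfl⟩

lemma dn_nonempty (n : ℕ) (c : Fin (n * n + 1)) : (dn n c).Nonempty := by
  unfold dn; split <;> exact ⟨_, rfl⟩

lemma step_nonempty (n : ℕ) (q : MQ n) (a : Sym3) : (step n q a).Nonempty := by
  rcases q with ⟨m, c⟩
  cases m <;> cases a <;>
    first
      | exact ⟨_, rfl⟩
      | exact ⟨(Mode.S, c), Or.inr rfl⟩
      | exact ⟨(Mode.S2, c), Or.inr rfl⟩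
      | exact up_nonempty n c
      | exact dn_nonempty n c

def mach (n : ℕ) : OneNFA Sym3 where
  Q := MQ n
  start := (Mode.W, ⟨0, by omega⟩)
  next := step n
  next_nonempty := step_nonempty n
  acc := {q | (q.1 = Mode.C2 ∨ q.1 = Mode.D2) ∧ q.2.val = 0}

lemma mach_next (n : ℕ) : (mach n).next = step n := rfl

def triv : OneNFA Sym3 where
  Q := Unit
  start := ()
  next := fun _ _ => {()}
  next_nonempty := fun _ _ => ⟨(), rfl⟩
  acc := Set.univ

lemma triv_accepts (x : List Sym3) : triv.Accepts x :=
  ⟨fun _ => (), ⟨rfl, fun _ => rfl⟩, trivial⟩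

/-! ### Words -/

def ones (a : ℕ) : List Sym3 := List.replicate a Sym3.one
def zeros (k : ℕ) : List Sym3 := List.replicate k Sym3.zero

lemma block_eq (n i : ℕ) : block n i = ones i ++ zeros (n - i) := rfl

lemma hash_not_mem_block (n i : ℕ) : Sym3.hash ∉ block n i := by
  simp only [block, List.mem_append, List.mem_replicate]
  rintro (⟨-, h⟩ | ⟨-, h⟩) <;> exact Sym3.noConfusion h

lemma hash_not_mem_enc (n : ℕ) : ∀ r : List ℕ, Sym3.hash ∉ enc n r
  | [] => by simp [enc]
  | [i] => by simpa [enc] using hash_not_mem_block n i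
  | i :: j :: rest => by
      show Sym3.hash ∉ block n i ++ Sym3.zero :: enc n (j :: rest)
      simp only [List.mem_append, List.mem_cons]
      rintro (h | h | h)
      · exact hash_not_mem_block n i h
      · exact Sym3.noConfusion h
      · exact hash_not_mem_enc n (j :: rest) h

lemma block_head (n i : ℕ) (hi : 1 ≤ i) : ∃ t, block n i = Sym3.one :: t := by
  obtain ⟨i', rfl⟩ : ∃ i', i = i' + 1 := ⟨i - 1, by omega⟩
  exact ⟨List.replicate i' Sym3.one ++ List.replicate (n - (i' + 1)) Sym3.zero,
    by simp [block, List.replicate_succ]⟩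

lemma enc_head (n : ℕ) (i : ℕ) (rest : List ℕ) (hi : 1 ≤ i) :
    ∃ t, enc n (i :: rest) = Sym3.one :: t := by
  obtain ⟨t, ht⟩ := block_head n i hi
  cases rest with
  | nil => exact ⟨t, ht⟩
  | cons j rest' =>
      exact ⟨t ++ Sym3.zero :: enc n (j :: rest'),
        by show block n i ++ _ = _; rw [ht]; simp⟩

lemma encMat_head (n : ℕ) (i : ℕ) (r' : List ℕ) (R : List (List ℕ)) (hi : 1 ≤ i) :
    ∃ t, encMat n ((i :: r') :: R) = Sym3.one :: t := by
  obtain ⟨t, ht⟩ := enc_head n i r' hi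
  cases R with
  | nil => exact ⟨t, ht⟩
  | cons s R' =>
      exact ⟨t ++ Sym3.hash :: encMat n (s :: R'),
        by show enc n (i :: r') ++ _ = _; rw [ht]; simp⟩

lemma selSum_nil_eq {s : ℕ} (h : SelSum [] s) : s = 0 := by cases h; rfl

lemma selSum_le (n : ℕ) : ∀ {R : List (List ℕ)} {s : ℕ}, SelSum R s →
    (∀ r ∈ R, ∀ i ∈ r, i ≤ n) → s ≤ R.length * n := by
  intro R s h
  induction h with
  | nil => simp
  | @cons a r rest s' ha _ ih =>
      intro hb
      have h1 : a ≤ n := hb r (by simp) a ha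
      have h2 : s' ≤ rest.length * n := ih fun r' hr' => hb r' (by simp [hr'])
      simp only [List.length_cons]
      calc a + s' ≤ n + rest.length * n := by omega
      _ = (rest.length + 1) * n := by ring


/-! ### Membership helpers -/

lemma reach_cons_elim {n : ℕ} {q : MQ n} {a : Sym3} {w : List Sym3} {q' : MQ n}
    (h : Reach (mach n) q (a :: w) q') :
    ∃ q1, q1 ∈ step n q a ∧ Reach (mach n) q1 w q' := reach_cons_iff.1 h

lemma mem_up_elim {n : ℕ} {c : Fin (n*n+1)} {q1 : MQ n} (hm : q1 ∈ up n c) :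
    (c.val < n * n ∧ q1.1 = Mode.C ∧ q1.2.val = c.val + 1) ∨ q1 = (Mode.X, c) := by
  unfold up at hm
  split at hm
  · rw [Set.mem_singleton_iff] at hm
    exact Or.inl ⟨by assumption, by rw [hm], by rw [hm]⟩
  · exact Or.inr hm

lemma mem_dn_elim {n : ℕ} {c : Fin (n*n+1)} {q1 : MQ n} (hm : q1 ∈ dn n c) :
    (0 < c.val ∧ q1.1 = Mode.C2 ∧ q1.2.val = c.val - 1) ∨ q1 = (Mode.X, c) := by
  unfold dn at hm
  split at hm
  · rw [Set.mem_singleton_iff] at hm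
    exact Or.inl ⟨by assumption, by rw [hm], by rw [hm]⟩
  · exact Or.inr hm

lemma mem_up_intro {n : ℕ} {c : Fin (n*n+1)} (h : c.val < n * n) :
    ((Mode.C, ⟨c.val + 1, by omega⟩) : MQ n) ∈ up n c := by
  unfold up; rw [dif_pos h]; rfl

lemma mem_dn_intro {n : ℕ} {c : Fin (n*n+1)} (h : 0 < c.val) :
    ((Mode.C2, ⟨c.val - 1, by omega⟩) : MQ n) ∈ dn n c := by
  unfold dn; rw [dif_pos h]; rfl

lemma hash_not_mem_ones (a : ℕ) : Sym3.hash ∉ ones a := by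
  simp only [ones, List.mem_replicate]; rintro ⟨-, h⟩; exact Sym3.noConfusion h

lemma hash_not_mem_zeros (k : ℕ) : Sym3.hash ∉ zeros k := by
  simp only [zeros, List.mem_replicate]; rintro ⟨-, h⟩; exact Sym3.noConfusion h

/-! ### Backward lemmas, phase 1 -/

lemma reach_X {n : ℕ} (w : List Sym3) (c : Fin (n*n+1)) {q' : MQ n}
    (h : Reach (mach n) (Mode.X, c) w q') : q' = (Mode.X, c) := by
  induction w with
  | nil => exact reach_nil_iff.1 h
  | cons a t ih =>
      obtain ⟨q1, hm, hr⟩ := reach_cons_elim h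
      have hq : q1 = (Mode.X, c) := hm
      subst hq
      exact ih hr

lemma reach_S_ones {n : ℕ} (a : ℕ) (c : Fin (n*n+1)) {q' : MQ n}
    (h : Reach (mach n) (Mode.S, c) (ones a) q') : q' = (Mode.S, c) := by
  induction a with
  | zero => exact reach_nil_iff.1 h
  | succ a ih =>
      rw [ones, List.replicate_succ] at h
      obtain ⟨q1, hm, hr⟩ := reach_cons_elim h
      have hq : q1 = (Mode.S, c) := hm
      subst hq
      exact ih hr

lemma reach_C_ones {n : ℕ} : ∀ (a : ℕ) (c : Fin (n*n+1)) {q' : MQ n},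
    Reach (mach n) (Mode.C, c) (ones a) q' →
    q'.1 = Mode.X ∨ (q'.1 = Mode.C ∧ q'.2.val = c.val + a) := by
  intro a
  induction a with
  | zero =>
      intro c q' h
      rw [reach_nil_iff.1 h]
      exact Or.inr ⟨rfl, rfl⟩
  | succ a ih =>
      intro c q' h
      rw [ones, List.replicate_succ] at h
      obtain ⟨q1, hm, hr⟩ := reach_cons_elim h
      rcases mem_up_elim hm with ⟨hlt, h1, h2⟩ | rfl
      · rcases q1 with ⟨m1, c1⟩
        simp only at h1 h2
        subst h1
        rcases ih c1 hr with hX | ⟨hC, hv⟩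
        · exact Or.inl hX
        · exact Or.inr ⟨hC, by omega⟩
      · rw [reach_X _ _ hr]
        exact Or.inl rfl

lemma reach_W_ones {n : ℕ} (a : ℕ) (ha : 1 ≤ a) (c : Fin (n*n+1)) {q' : MQ n}
    (h : Reach (mach n) (Mode.W, c) (ones a) q') :
    q'.1 = Mode.X ∨ q' = (Mode.S, c) ∨ (q'.1 = Mode.C ∧ q'.2.val = c.val + a) := by
  obtain ⟨a', rfl⟩ : ∃ a', a = a' + 1 := ⟨a - 1, by omega⟩
  rw [ones, List.replicate_succ] at h
  obtain ⟨q1, hm, hr⟩ := reach_cons_elim h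
  rcases (Set.mem_union _ _ _).1 hm with hm' | hm'
  · rcases mem_up_elim hm' with ⟨hlt, h1, h2⟩ | rfl
    · rcases q1 with ⟨m1, c1⟩
      simp only at h1 h2
      subst h1
      rcases reach_C_ones a' c1 hr with hX | ⟨hC, hv⟩
      · exact Or.inl hX
      · exact Or.inr (Or.inr ⟨hC, by omega⟩)
    · rw [reach_X _ _ hr]
      exact Or.inl rfl
  · have hq : q1 = (Mode.S, c) := hm'
    subst hq
    rw [reach_S_ones a' c hr]
    exact Or.inr (Or.inl rfl)

lemma reach_W_zeros {n : ℕ} (k : ℕ) (c : Fin (n*n+1)) {q' : MQ n}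
    (h : Reach (mach n) (Mode.W, c) (zeros k) q') : q' = (Mode.W, c) := by
  induction k with
  | zero => exact reach_nil_iff.1 h
  | succ k ih =>
      rw [zeros, List.replicate_succ] at h
      obtain ⟨q1, hm, hr⟩ := reach_cons_elim h
      have hq : q1 = (Mode.W, c) := hm
      subst hq
      exact ih hr

lemma reach_D_nohash {n : ℕ} : ∀ (w : List Sym3), Sym3.hash ∉ w →
    ∀ (c : Fin (n*n+1)) {q' : MQ n},
    Reach (mach n) (Mode.D, c) w q' → q' = (Mode.D, c) := by
  intro w
  induction w with
  | nil => intro _ c q' h; exact reach_nil_iff.1 h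
  | cons a t ih =>
      intro hh c q' h
      obtain ⟨q1, hm, hr⟩ := reach_cons_elim h
      have hq : q1 = (Mode.D, c) := by
        cases a
        · exact hm
        · exact hm
        · exact absurd (by simp) hh
      subst hq
      exact ih (fun hx => hh (by simp [hx])) c hr

lemma reach_S_zeros {n : ℕ} (k : ℕ) (c : Fin (n*n+1)) {q' : MQ n}
    (h : Reach (mach n) (Mode.S, c) (zeros k) q') :
    q' = (Mode.S, c) ∨ q' = (Mode.W, c) := by
  cases k with
  | zero => exact Or.inl (reach_nil_iff.1 h)
  | succ k =>
      rw [zeros, List.replicate_succ] at h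
      obtain ⟨q1, hm, hr⟩ := reach_cons_elim h
      have hq : q1 = (Mode.W, c) := hm
      subst hq
      exact Or.inr (reach_W_zeros k c hr)

lemma reach_C_zeros {n : ℕ} (k : ℕ) (c : Fin (n*n+1)) {q' : MQ n}
    (h : Reach (mach n) (Mode.C, c) (zeros k) q') :
    q' = (Mode.C, c) ∨ q' = (Mode.D, c) := by
  cases k with
  | zero => exact Or.inl (reach_nil_iff.1 h)
  | succ k =>
      rw [zeros, List.replicate_succ] at h
      obtain ⟨q1, hm, hr⟩ := reach_cons_elim h
      have hq : q1 = (Mode.D, c) := hm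
      subst hq
      exact Or.inr (reach_D_nohash _ (hash_not_mem_zeros k) c hr)

lemma reach_W_block {n : ℕ} (i : ℕ) (hi : 1 ≤ i) (c : Fin (n*n+1)) {q' : MQ n}
    (h : Reach (mach n) (Mode.W, c) (block n i) q') :
    q'.1 = Mode.X ∨ q' = (Mode.W, c) ∨ q' = (Mode.S, c) ∨
      ((q'.1 = Mode.C ∨ q'.1 = Mode.D) ∧ q'.2.val = c.val + i) := by
  rw [block_eq] at h
  obtain ⟨q1, h1, h2⟩ := reach_append.1 h
  rcases reach_W_ones i hi c h1 with hX | rfl | ⟨hC, hv⟩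
  · rcases q1 with ⟨m1, c1⟩
    simp only at hX
    subst hX
    rw [reach_X _ _ h2]
    exact Or.inl rfl
  · rcases reach_S_zeros _ c h2 with rfl | rfl
    · exact Or.inr (Or.inr (Or.inl rfl))
    · exact Or.inr (Or.inl rfl)
  · rcases q1 with ⟨m1, c1⟩
    simp only at hC hv
    subst hC
    rcases reach_C_zeros _ c1 h2 with rfl | rfl
    · exact Or.inr (Or.inr (Or.inr ⟨Or.inl rfl, hv⟩))
    · exact Or.inr (Or.inr (Or.inr ⟨Or.inr rfl, hv⟩))

lemma reach_W_enc {n : ℕ} : ∀ (r : List ℕ), (∀ i ∈ r, 1 ≤ i ∧ i ≤ n) →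
    ∀ (c : Fin (n*n+1)) (q' : MQ n), Reach (mach n) (Mode.W, c) (enc n r) q' →
    q'.1 = Mode.X ∨ q'.1 = Mode.W ∨ q'.1 = Mode.S ∨
      ∃ a ∈ r, (q'.1 = Mode.C ∨ q'.1 = Mode.D) ∧ q'.2.val = c.val + a
  | [] => by
      intro _ c q' h
      rw [reach_nil_iff.1 h]
      exact Or.inr (Or.inl rfl)
  | [i] => by
      intro hv c q' h
      have h' : Reach (mach n) (Mode.W, c) (block n i) q' := h
      rcases reach_W_block i (hv i (by simp)).1 c h' with hX | rfl | rfl | ⟨hCD, hval⟩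
      · exact Or.inl hX
      · exact Or.inr (Or.inl rfl)
      · exact Or.inr (Or.inr (Or.inl rfl))
      · exact Or.inr (Or.inr (Or.inr ⟨i, by simp, hCD, hval⟩))
  | i :: j :: rest => by
      intro hv c q' h
      have h' : Reach (mach n) (Mode.W, c)
          (block n i ++ Sym3.zero :: enc n (j :: rest)) q' := h
      obtain ⟨q1, h1, h2⟩ := reach_append.1 h'
      rcases reach_W_block i (hv i (by simp)).1 c h1 with hX | rfl | rfl | ⟨hCD, hval⟩
      · rcases q1 with ⟨m1, c1⟩
        simp only at hX
        subst hX
        rw [reach_X _ _ h2]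
        exact Or.inl rfl
      · obtain ⟨q2, hm, hr⟩ := reach_cons_elim h2
        have hq : q2 = (Mode.W, c) := hm
        subst hq
        rcases reach_W_enc (j :: rest) (fun x hx => hv x (List.mem_cons_of_mem _ hx)) c q' hr
          with hX | hW | hS | ⟨a, hamem, hCD, hval⟩
        · exact Or.inl hX
        · exact Or.inr (Or.inl hW)
        · exact Or.inr (Or.inr (Or.inl hS))
        · exact Or.inr (Or.inr (Or.inr ⟨a, List.mem_cons_of_mem _ hamem, hCD, hval⟩))
      · obtain ⟨q2, hm, hr⟩ := reach_cons_elim h2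
        have hq : q2 = (Mode.W, c) := hm
        subst hq
        rcases reach_W_enc (j :: rest) (fun x hx => hv x (List.mem_cons_of_mem _ hx)) c q' hr
          with hX | hW | hS | ⟨a, hamem, hCD, hval⟩
        · exact Or.inl hX
        · exact Or.inr (Or.inl hW)
        · exact Or.inr (Or.inr (Or.inl hS))
        · exact Or.inr (Or.inr (Or.inr ⟨a, List.mem_cons_of_mem _ hamem, hCD, hval⟩))
      · rcases q1 with ⟨m1, c1⟩
        simp only at hCD hval
        obtain ⟨q2, hm, hr⟩ := reach_cons_elim h2
        have hq : q2 = (Mode.D, c1) := by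
          rcases hCD with h' | h' <;> (subst h'; exact hm)
        subst hq
        rw [reach_D_nohash _ (hash_not_mem_enc n (j :: rest)) c1 hr]
        exact Or.inr (Or.inr (Or.inr ⟨i, by simp, Or.inr rfl, hval⟩))

lemma reach_W_encMat {n : ℕ} (hn : 1 ≤ n) :
    ∀ (R : List (List ℕ)), (∀ r ∈ R, ValidList n n r) →
    ∀ (c : Fin (n*n+1)) (q' : MQ n), Reach (mach n) (Mode.W, c) (encMat n R) q' →
    q'.1 = Mode.X ∨ q'.1 = Mode.W ∨ q'.1 = Mode.S ∨
      ∃ s, SelSum R s ∧ (q'.1 = Mode.C ∨ q'.1 = Mode.D) ∧ q'.2.val = c.val + s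
  | [] => by
      intro _ c q' h
      rw [reach_nil_iff.1 h]
      exact Or.inr (Or.inl rfl)
  | [r] => by
      intro hv c q' h
      have h' : Reach (mach n) (Mode.W, c) (enc n r) q' := h
      rcases reach_W_enc r (hv r (by simp)).2 c q' h' with hX | hW | hS | ⟨a, hamem, hCD, hval⟩
      · exact Or.inl hX
      · exact Or.inr (Or.inl hW)
      · exact Or.inr (Or.inr (Or.inl hS))
      · exact Or.inr (Or.inr (Or.inr ⟨a, SelSum.cons hamem SelSum.nil, hCD, hval⟩))
  | r :: t :: Rest => by
      intro hv c q' h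
      have h' : Reach (mach n) (Mode.W, c)
          (enc n r ++ Sym3.hash :: encMat n (t :: Rest)) q' := h
      obtain ⟨q1, h1, h2⟩ := reach_append.1 h'
      rcases reach_W_enc r (hv r (by simp)).2 c q1 h1 with hX | hW | hS | ⟨a, hamem, hCD, hval⟩
      · rcases q1 with ⟨m1, c1⟩
        simp only at hX
        subst hX
        rw [reach_X _ _ h2]
        exact Or.inl rfl
      · rcases q1 with ⟨m1, c1⟩
        simp only at hW
        subst hW
        obtain ⟨q2, hm, hr⟩ := reach_cons_elim h2
        have hq : q2 = (Mode.X, c1) := hm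
        subst hq
        rw [reach_X _ _ hr]
        exact Or.inl rfl
      · rcases q1 with ⟨m1, c1⟩
        simp only at hS
        subst hS
        obtain ⟨q2, hm, hr⟩ := reach_cons_elim h2
        have hq : q2 = (Mode.X, c1) := hm
        subst hq
        rw [reach_X _ _ hr]
        exact Or.inl rfl
      · rcases q1 with ⟨m1, c1⟩
        simp only at hCD hval
        obtain ⟨q2, hm, hr⟩ := reach_cons_elim h2
        have hq : q2 = (Mode.H, c1) := by
          rcases hCD with h' | h' <;> (subst h'; exact hm)
        subst hq
        obtain ⟨it, t', rfl⟩ : ∃ it t', t = it :: t' := by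
          have hlen := (hv t (by simp)).1
          cases t with
          | nil => exfalso; simp at hlen; omega
          | cons it t' => exact ⟨it, t', rfl⟩
        obtain ⟨tl, htl⟩ := encMat_head n it t' Rest
          (((hv (it :: t') (by simp)).2) it (by simp)).1
        rw [htl] at hr
        obtain ⟨q3, hm3, hr3⟩ := reach_cons_elim hr
        have hr' : Reach (mach n) (Mode.W, c1) (encMat n ((it :: t') :: Rest)) q' := by
          rw [htl]
          exact reach_cons_iff.2 ⟨q3, hm3, hr3⟩
        rcases reach_W_encMat hn ((it :: t') :: Rest)
            (fun x hx => hv x (List.mem_cons_of_mem _ hx)) c1 q' hr'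
          with hX | hW | hS | ⟨s, hsel, hCD', hval'⟩
        · exact Or.inl hX
        · exact Or.inr (Or.inl hW)
        · exact Or.inr (Or.inr (Or.inl hS))
        · exact Or.inr (Or.inr (Or.inr ⟨a + s, SelSum.cons hamem hsel, hCD', by omega⟩))


/-! ### Backward lemmas, phase 2 -/

lemma reach_S2_ones {n : ℕ} (a : ℕ) (c : Fin (n*n+1)) {q' : MQ n}
    (h : Reach (mach n) (Mode.S2, c) (ones a) q') : q' = (Mode.S2, c) := by
  induction a with
  | zero => exact reach_nil_iff.1 h
  | succ a ih =>
      rw [ones, List.replicate_succ] at h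
      obtain ⟨q1, hm, hr⟩ := reach_cons_elim h
      have hq : q1 = (Mode.S2, c) := hm
      subst hq
      exact ih hr

lemma reach_C2_ones {n : ℕ} : ∀ (a : ℕ) (c : Fin (n*n+1)) {q' : MQ n},
    Reach (mach n) (Mode.C2, c) (ones a) q' →
    q'.1 = Mode.X ∨ (a ≤ c.val ∧ q'.1 = Mode.C2 ∧ q'.2.val = c.val - a) := by
  intro a
  induction a with
  | zero =>
      intro c q' h
      rw [reach_nil_iff.1 h]
      exact Or.inr ⟨by omega, rfl, rfl⟩
  | succ a ih =>
      intro c q' h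
      rw [ones, List.replicate_succ] at h
      obtain ⟨q1, hm, hr⟩ := reach_cons_elim h
      rcases mem_dn_elim hm with ⟨hlt, h1, h2⟩ | rfl
      · rcases q1 with ⟨m1, c1⟩
        simp only at h1 h2
        subst h1
        rcases ih c1 hr with hX | ⟨hle, hC, hv⟩
        · exact Or.inl hX
        · exact Or.inr ⟨by omega, hC, by omega⟩
      · rw [reach_X _ _ hr]
        exact Or.inl rfl

lemma reach_W2_ones {n : ℕ} (a : ℕ) (ha : 1 ≤ a) (c : Fin (n*n+1)) {q' : MQ n}
    (h : Reach (mach n) (Mode.W2, c) (ones a) q') :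
    q'.1 = Mode.X ∨ q' = (Mode.S2, c) ∨
      (a ≤ c.val ∧ q'.1 = Mode.C2 ∧ q'.2.val = c.val - a) := by
  obtain ⟨a', rfl⟩ : ∃ a', a = a' + 1 := ⟨a - 1, by omega⟩
  rw [ones, List.replicate_succ] at h
  obtain ⟨q1, hm, hr⟩ := reach_cons_elim h
  rcases (Set.mem_union _ _ _).1 hm with hm' | hm'
  · rcases mem_dn_elim hm' with ⟨hlt, h1, h2⟩ | rfl
    · rcases q1 with ⟨m1, c1⟩
      simp only at h1 h2
      subst h1
      rcases reach_C2_ones a' c1 hr with hX | ⟨hle, hC, hv⟩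
      · exact Or.inl hX
      · exact Or.inr (Or.inr ⟨by omega, hC, by omega⟩)
    · rw [reach_X _ _ hr]
      exact Or.inl rfl
  · have hq : q1 = (Mode.S2, c) := hm'
    subst hq
    rw [reach_S2_ones a' c hr]
    exact Or.inr (Or.inl rfl)

lemma reach_W2_zeros {n : ℕ} (k : ℕ) (c : Fin (n*n+1)) {q' : MQ n}
    (h : Reach (mach n) (Mode.W2, c) (zeros k) q') : q' = (Mode.W2, c) := by
  induction k with
  | zero => exact reach_nil_iff.1 h
  | succ k ih =>
      rw [zeros, List.replicate_succ] at h
      obtain ⟨q1, hm, hr⟩ := reach_cons_elim h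
      have hq : q1 = (Mode.W2, c) := hm
      subst hq
      exact ih hr

lemma reach_D2_nohash {n : ℕ} : ∀ (w : List Sym3), Sym3.hash ∉ w →
    ∀ (c : Fin (n*n+1)) {q' : MQ n},
    Reach (mach n) (Mode.D2, c) w q' → q' = (Mode.D2, c) := by
  intro w
  induction w with
  | nil => intro _ c q' h; exact reach_nil_iff.1 h
  | cons a t ih =>
      intro hh c q' h
      obtain ⟨q1, hm, hr⟩ := reach_cons_elim h
      have hq : q1 = (Mode.D2, c) := by
        cases a
        · exact hm
        · exact hm
        · exact absurd (by simp) hh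
      subst hq
      exact ih (fun hx => hh (by simp [hx])) c hr

lemma reach_S2_zeros {n : ℕ} (k : ℕ) (c : Fin (n*n+1)) {q' : MQ n}
    (h : Reach (mach n) (Mode.S2, c) (zeros k) q') :
    q' = (Mode.S2, c) ∨ q' = (Mode.W2, c) := by
  cases k with
  | zero => exact Or.inl (reach_nil_iff.1 h)
  | succ k =>
      rw [zeros, List.replicate_succ] at h
      obtain ⟨q1, hm, hr⟩ := reach_cons_elim h
      have hq : q1 = (Mode.W2, c) := hm
      subst hq
      exact Or.inr (reach_W2_zeros k c hr)

lemma reach_C2_zeros {n : ℕ} (k : ℕ) (c : Fin (n*n+1)) {q' : MQ n}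
    (h : Reach (mach n) (Mode.C2, c) (zeros k) q') :
    q' = (Mode.C2, c) ∨ q' = (Mode.D2, c) := by
  cases k with
  | zero => exact Or.inl (reach_nil_iff.1 h)
  | succ k =>
      rw [zeros, List.replicate_succ] at h
      obtain ⟨q1, hm, hr⟩ := reach_cons_elim h
      have hq : q1 = (Mode.D2, c) := hm
      subst hq
      exact Or.inr (reach_D2_nohash _ (hash_not_mem_zeros k) c hr)

lemma reach_W2_block {n : ℕ} (i : ℕ) (hi : 1 ≤ i) (c : Fin (n*n+1)) {q' : MQ n}
    (h : Reach (mach n) (Mode.W2, c) (block n i) q') :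
    q'.1 = Mode.X ∨ q' = (Mode.W2, c) ∨ q' = (Mode.S2, c) ∨
      (i ≤ c.val ∧ (q'.1 = Mode.C2 ∨ q'.1 = Mode.D2) ∧ q'.2.val = c.val - i) := by
  rw [block_eq] at h
  obtain ⟨q1, h1, h2⟩ := reach_append.1 h
  rcases reach_W2_ones i hi c h1 with hX | rfl | ⟨hle, hC, hv⟩
  · rcases q1 with ⟨m1, c1⟩
    simp only at hX
    subst hX
    rw [reach_X _ _ h2]
    exact Or.inl rfl
  · rcases reach_S2_zeros _ c h2 with rfl | rfl
    · exact Or.inr (Or.inr (Or.inl rfl))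
    · exact Or.inr (Or.inl rfl)
  · rcases q1 with ⟨m1, c1⟩
    simp only at hC hv
    subst hC
    rcases reach_C2_zeros _ c1 h2 with rfl | rfl
    · exact Or.inr (Or.inr (Or.inr ⟨hle, Or.inl rfl, hv⟩))
    · exact Or.inr (Or.inr (Or.inr ⟨hle, Or.inr rfl, hv⟩))

lemma reach_W2_enc {n : ℕ} : ∀ (r : List ℕ), (∀ i ∈ r, 1 ≤ i ∧ i ≤ n) →
    ∀ (c : Fin (n*n+1)) (q' : MQ n), Reach (mach n) (Mode.W2, c) (enc n r) q' →
    q'.1 = Mode.X ∨ q'.1 = Mode.W2 ∨ q'.1 = Mode.S2 ∨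
      ∃ a ∈ r, a ≤ c.val ∧ (q'.1 = Mode.C2 ∨ q'.1 = Mode.D2) ∧ q'.2.val = c.val - a
  | [] => by
      intro _ c q' h
      rw [reach_nil_iff.1 h]
      exact Or.inr (Or.inl rfl)
  | [i] => by
      intro hv c q' h
      have h' : Reach (mach n) (Mode.W2, c) (block n i) q' := h
      rcases reach_W2_block i (hv i (by simp)).1 c h' with hX | rfl | rfl | ⟨hle, hCD, hval⟩
      · exact Or.inl hX
      · exact Or.inr (Or.inl rfl)
      · exact Or.inr (Or.inr (Or.inl rfl))
      · exact Or.inr (Or.inr (Or.inr ⟨i, by simp, hle, hCD, hval⟩))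
  | i :: j :: rest => by
      intro hv c q' h
      have h' : Reach (mach n) (Mode.W2, c)
          (block n i ++ Sym3.zero :: enc n (j :: rest)) q' := h
      obtain ⟨q1, h1, h2⟩ := reach_append.1 h'
      rcases reach_W2_block i (hv i (by simp)).1 c h1 with hX | rfl | rfl | ⟨hle, hCD, hval⟩
      · rcases q1 with ⟨m1, c1⟩
        simp only at hX
        subst hX
        rw [reach_X _ _ h2]
        exact Or.inl rfl
      · obtain ⟨q2, hm, hr⟩ := reach_cons_elim h2
        have hq : q2 = (Mode.W2, c) := hm
        subst hq
        rcases reach_W2_enc (j :: rest) (fun x hx => hv x (List.mem_cons_of_mem _ hx)) c q' hr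
          with hX | hW | hS | ⟨a, hamem, hle, hCD, hval⟩
        · exact Or.inl hX
        · exact Or.inr (Or.inl hW)
        · exact Or.inr (Or.inr (Or.inl hS))
        · exact Or.inr (Or.inr (Or.inr ⟨a, List.mem_cons_of_mem _ hamem, hle, hCD, hval⟩))
      · obtain ⟨q2, hm, hr⟩ := reach_cons_elim h2
        have hq : q2 = (Mode.W2, c) := hm
        subst hq
        rcases reach_W2_enc (j :: rest) (fun x hx => hv x (List.mem_cons_of_mem _ hx)) c q' hr
          with hX | hW | hS | ⟨a, hamem, hle, hCD, hval⟩
        · exact Or.inl hX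
        · exact Or.inr (Or.inl hW)
        · exact Or.inr (Or.inr (Or.inl hS))
        · exact Or.inr (Or.inr (Or.inr ⟨a, List.mem_cons_of_mem _ hamem, hle, hCD, hval⟩))
      · rcases q1 with ⟨m1, c1⟩
        simp only at hCD hval
        obtain ⟨q2, hm, hr⟩ := reach_cons_elim h2
        have hq : q2 = (Mode.D2, c1) := by
          rcases hCD with h' | h' <;> (subst h'; exact hm)
        subst hq
        rw [reach_D2_nohash _ (hash_not_mem_enc n (j :: rest)) c1 hr]
        exact Or.inr (Or.inr (Or.inr ⟨i, by simp, hle, Or.inr rfl, hval⟩))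

lemma reach_W2_encMat {n : ℕ} (hn : 1 ≤ n) :
    ∀ (R : List (List ℕ)), (∀ r ∈ R, ValidList n n r) →
    ∀ (c : Fin (n*n+1)) (q' : MQ n), Reach (mach n) (Mode.W2, c) (encMat n R) q' →
    q'.1 = Mode.X ∨ q'.1 = Mode.W2 ∨ q'.1 = Mode.S2 ∨
      ∃ s, SelSum R s ∧ s ≤ c.val ∧ (q'.1 = Mode.C2 ∨ q'.1 = Mode.D2) ∧ q'.2.val = c.val - s
  | [] => by
      intro _ c q' h
      rw [reach_nil_iff.1 h]
      exact Or.inr (Or.inl rfl)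
  | [r] => by
      intro hv c q' h
      have h' : Reach (mach n) (Mode.W2, c) (enc n r) q' := h
      rcases reach_W2_enc r (hv r (by simp)).2 c q' h'
        with hX | hW | hS | ⟨a, hamem, hle, hCD, hval⟩
      · exact Or.inl hX
      · exact Or.inr (Or.inl hW)
      · exact Or.inr (Or.inr (Or.inl hS))
      · exact Or.inr (Or.inr (Or.inr ⟨a, SelSum.cons hamem SelSum.nil, hle, hCD, hval⟩))
  | r :: t :: Rest => by
      intro hv c q' h
      have h' : Reach (mach n) (Mode.W2, c)
          (enc n r ++ Sym3.hash :: encMat n (t :: Rest)) q' := h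
      obtain ⟨q1, h1, h2⟩ := reach_append.1 h'
      rcases reach_W2_enc r (hv r (by simp)).2 c q1 h1
        with hX | hW | hS | ⟨a, hamem, hle, hCD, hval⟩
      · rcases q1 with ⟨m1, c1⟩
        simp only at hX
        subst hX
        rw [reach_X _ _ h2]
        exact Or.inl rfl
      · rcases q1 with ⟨m1, c1⟩
        simp only at hW
        subst hW
        obtain ⟨q2, hm, hr⟩ := reach_cons_elim h2
        have hq : q2 = (Mode.X, c1) := hm
        subst hq
        rw [reach_X _ _ hr]
        exact Or.inl rfl
      · rcases q1 with ⟨m1, c1⟩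
        simp only at hS
        subst hS
        obtain ⟨q2, hm, hr⟩ := reach_cons_elim h2
        have hq : q2 = (Mode.X, c1) := hm
        subst hq
        rw [reach_X _ _ hr]
        exact Or.inl rfl
      · rcases q1 with ⟨m1, c1⟩
        simp only at hCD hval
        obtain ⟨q2, hm, hr⟩ := reach_cons_elim h2
        have hq : q2 = (Mode.H2, c1) := by
          rcases hCD with h' | h' <;> (subst h'; exact hm)
        subst hq
        obtain ⟨it, t', rfl⟩ : ∃ it t', t = it :: t' := by
          have hlen := (hv t (by simp)).1
          cases t with
          | nil => exfalso; simp at hlen; omega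
          | cons it t' => exact ⟨it, t', rfl⟩
        obtain ⟨tl, htl⟩ := encMat_head n it t' Rest
          (((hv (it :: t') (by simp)).2) it (by simp)).1
        rw [htl] at hr
        obtain ⟨q3, hm3, hr3⟩ := reach_cons_elim hr
        have hr' : Reach (mach n) (Mode.W2, c1) (encMat n ((it :: t') :: Rest)) q' := by
          rw [htl]
          exact reach_cons_iff.2 ⟨q3, hm3, hr3⟩
        rcases reach_W2_encMat hn ((it :: t') :: Rest)
            (fun x hx => hv x (List.mem_cons_of_mem _ hx)) c1 q' hr'
          with hX | hW | hS | ⟨s, hsel, hle', hCD', hval'⟩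
        · exact Or.inl hX
        · exact Or.inr (Or.inl hW)
        · exact Or.inr (Or.inr (Or.inl hS))
        · exact Or.inr (Or.inr (Or.inr ⟨a + s, SelSum.cons hamem hsel, by omega, hCD', by omega⟩))


/-! ### Forward lemmas, phase 1 -/

lemma fwd_S_ones {n : ℕ} (a : ℕ) (c : Fin (n*n+1)) :
    Reach (mach n) (Mode.S, c) (ones a) (Mode.S, c) := by
  induction a with
  | zero => exact Reach.nil _
  | succ a ih =>
      rw [ones, List.replicate_succ]
      exact Reach.cons rfl ih

lemma fwd_W_zeros {n : ℕ} (k : ℕ) (c : Fin (n*n+1)) :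
    Reach (mach n) (Mode.W, c) (zeros k) (Mode.W, c) := by
  induction k with
  | zero => exact Reach.nil _
  | succ k ih =>
      rw [zeros, List.replicate_succ]
      exact Reach.cons rfl ih

lemma fwd_D_nohash {n : ℕ} : ∀ (w : List Sym3), Sym3.hash ∉ w → ∀ (c : Fin (n*n+1)),
    Reach (mach n) (Mode.D, c) w (Mode.D, c) := by
  intro w
  induction w with
  | nil => intro _ c; exact Reach.nil _
  | cons a t ih =>
      intro hh c
      have hstep : ((Mode.D, c) : MQ n) ∈ step n (Mode.D, c) a := by
        cases a
        · rfl
        · rfl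
        · exact absurd (by simp) hh
      exact Reach.cons hstep (ih (fun hx => hh (by simp [hx])) c)

lemma fwd_C_ones {n : ℕ} : ∀ (a : ℕ) (c : Fin (n*n+1)), c.val + a ≤ n * n →
    ∃ q' : MQ n, q'.1 = Mode.C ∧ q'.2.val = c.val + a ∧
      Reach (mach n) (Mode.C, c) (ones a) q' := by
  intro a
  induction a with
  | zero => intro c _; exact ⟨(Mode.C, c), rfl, rfl, Reach.nil _⟩
  | succ a ih =>
      intro c hb
      have hlt : c.val < n * n := by omega
      obtain ⟨q', h1, h2, hr⟩ := ih ⟨c.val + 1, by omega⟩ (by simpa using by omega)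
      refine ⟨q', h1, by simp at h2; omega, ?_⟩
      rw [ones, List.replicate_succ]
      exact Reach.cons (mem_up_intro hlt) hr

lemma fwd_S_zeros {n : ℕ} (k : ℕ) (c : Fin (n*n+1)) :
    ∃ q' : MQ n, (q' = (Mode.S, c) ∨ q' = (Mode.W, c)) ∧
      Reach (mach n) (Mode.S, c) (zeros k) q' := by
  cases k with
  | zero => exact ⟨(Mode.S, c), Or.inl rfl, Reach.nil _⟩
  | succ k =>
      refine ⟨(Mode.W, c), Or.inr rfl, ?_⟩
      rw [zeros, List.replicate_succ]
      exact Reach.cons rfl (fwd_W_zeros k c)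

lemma fwd_C_zeros {n : ℕ} (k : ℕ) (c : Fin (n*n+1)) :
    ∃ q' : MQ n, (q'.1 = Mode.C ∨ q'.1 = Mode.D) ∧ q'.2 = c ∧
      Reach (mach n) (Mode.C, c) (zeros k) q' := by
  cases k with
  | zero => exact ⟨(Mode.C, c), Or.inl rfl, rfl, Reach.nil _⟩
  | succ k =>
      refine ⟨(Mode.D, c), Or.inr rfl, rfl, ?_⟩
      rw [zeros, List.replicate_succ]
      exact Reach.cons rfl (fwd_D_nohash _ (hash_not_mem_zeros k) c)

lemma fwd_count_block {n : ℕ} (i : ℕ) (hi : 1 ≤ i) (c : Fin (n*n+1))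
    (hb : c.val + i ≤ n * n) :
    ∃ q' : MQ n, (q'.1 = Mode.C ∨ q'.1 = Mode.D) ∧ q'.2.val = c.val + i ∧
      Reach (mach n) (Mode.W, c) (block n i) q' := by
  obtain ⟨i', rfl⟩ : ∃ i', i = i' + 1 := ⟨i - 1, by omega⟩
  have hlt : c.val < n * n := by omega
  obtain ⟨qC, hC1, hC2, hrC⟩ := fwd_C_ones i' ⟨c.val + 1, by omega⟩ (show c.val + 1 + i' ≤ n * n by omega)
  rcases qC with ⟨mC, c2⟩
  simp only at hC1 hC2
  subst hC1
  obtain ⟨q', h1, h2, hrz⟩ := fwd_C_zeros (n - (i' + 1)) c2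
  refine ⟨q', h1, by rw [h2]; omega, ?_⟩
  show Reach (mach n) (Mode.W, c) (ones (i' + 1) ++ zeros (n - (i' + 1))) q'
  rw [ones, List.replicate_succ]
  exact Reach.cons (Or.inl (mem_up_intro hlt)) (reach_append.2 ⟨(Mode.C, c2), hrC, hrz⟩)

lemma fwd_skip_block {n : ℕ} (i : ℕ) (hi : 1 ≤ i) (c : Fin (n*n+1)) :
    ∃ q' : MQ n, (q' = (Mode.S, c) ∨ q' = (Mode.W, c)) ∧
      Reach (mach n) (Mode.W, c) (block n i) q' := by
  obtain ⟨i', rfl⟩ : ∃ i', i = i' + 1 := ⟨i - 1, by omega⟩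
  obtain ⟨q', h1, hrz⟩ := fwd_S_zeros (n - (i' + 1)) c
  refine ⟨q', h1, ?_⟩
  show Reach (mach n) (Mode.W, c) (ones (i' + 1) ++ zeros (n - (i' + 1))) q'
  rw [ones, List.replicate_succ]
  exact Reach.cons (Or.inr rfl) (reach_append.2 ⟨(Mode.S, c), fwd_S_ones i' c, hrz⟩)

lemma fwd_row {n : ℕ} : ∀ (r : List ℕ), (∀ i ∈ r, 1 ≤ i ∧ i ≤ n) →
    ∀ a, a ∈ r → ∀ (c : Fin (n*n+1)), c.val + a ≤ n * n →
    ∃ q' : MQ n, (q'.1 = Mode.C ∨ q'.1 = Mode.D) ∧ q'.2.val = c.val + a ∧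
      Reach (mach n) (Mode.W, c) (enc n r) q'
  | [] => by intro _ a ha; exact absurd ha (by simp)
  | [i] => by
      intro hv a ha c hb
      have : a = i := by simpa using ha
      subst this
      exact fwd_count_block a (hv a (by simp)).1 c hb
  | i :: j :: rest => by
      intro hv a ha c hb
      rcases List.mem_cons.1 ha with rfl | ha'
      · obtain ⟨q1, h1, h2, hr1⟩ := fwd_count_block a (hv a (by simp)).1 c hb
        rcases q1 with ⟨m1, c1⟩
        simp only at h1 h2
        have hstep : ((Mode.D, c1) : MQ n) ∈ step n (m1, c1) Sym3.zero := by
          rcases h1 with rfl | rfl <;> rfl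
        refine ⟨(Mode.D, c1), Or.inr rfl, h2, ?_⟩
        show Reach (mach n) (Mode.W, c) (block n a ++ Sym3.zero :: enc n (j :: rest)) _
        exact reach_append.2 ⟨(m1, c1), hr1,
          reach_cons_iff.2 ⟨(Mode.D, c1), hstep,
            fwd_D_nohash _ (hash_not_mem_enc n (j :: rest)) c1⟩⟩
      · obtain ⟨q1, h1, hr1⟩ := fwd_skip_block i (hv i (by simp)).1 c
        obtain ⟨q', hq1, hq2, hr'⟩ := fwd_row (j :: rest)
          (fun x hx => hv x (List.mem_cons_of_mem _ hx)) a ha' c hb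
        have hstep : ((Mode.W, c) : MQ n) ∈ step n q1 Sym3.zero := by
          rcases h1 with rfl | rfl <;> rfl
        refine ⟨q', hq1, hq2, ?_⟩
        show Reach (mach n) (Mode.W, c) (block n i ++ Sym3.zero :: enc n (j :: rest)) q'
        exact reach_append.2 ⟨q1, hr1, reach_cons_iff.2 ⟨(Mode.W, c), hstep, hr'⟩⟩

lemma fwd_mat {n : ℕ} (hn : 1 ≤ n) : ∀ (R : List (List ℕ)), (∀ r ∈ R, ValidList n n r) →
    ∀ s, SelSum R s → R ≠ [] → ∀ (c : Fin (n*n+1)), c.val + s ≤ n * n →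
    ∃ q' : MQ n, (q'.1 = Mode.C ∨ q'.1 = Mode.D) ∧ q'.2.val = c.val + s ∧
      Reach (mach n) (Mode.W, c) (encMat n R) q'
  | [] => by intro _ s _ hne; exact absurd rfl hne
  | [r] => by
      intro hv s hs _ c hb
      cases hs with
      | @cons a _ _ s' ha hs' =>
          have hz : s' = 0 := selSum_nil_eq hs'
          subst hz
          obtain ⟨q', h1, h2, hr⟩ := fwd_row r (hv r (by simp)).2 a ha c (by omega)
          exact ⟨q', h1, by omega, hr⟩
  | r :: t :: Rest => by
      intro hv s hs _ c hb
      cases hs with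
      | @cons a _ _ s' ha hs' =>
          obtain ⟨q1, h1, h2, hr1⟩ := fwd_row r (hv r (by simp)).2 a ha c (by omega)
          rcases q1 with ⟨m1, c1⟩
          simp only at h1 h2
          have hstepH : ((Mode.H, c1) : MQ n) ∈ step n (m1, c1) Sym3.hash := by
            rcases h1 with rfl | rfl <;> rfl
          obtain ⟨it, t', rfl⟩ : ∃ it t', t = it :: t' := by
            have hlen := (hv t (by simp)).1
            cases t with
            | nil => exfalso; simp at hlen; omega
            | cons it t' => exact ⟨it, t', rfl⟩
          obtain ⟨q', hq1, hq2, hr'⟩ := fwd_mat hn ((it :: t') :: Rest)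
            (fun x hx => hv x (List.mem_cons_of_mem _ hx)) s' hs' (by simp) c1
            (by omega)
          obtain ⟨tl, htl⟩ := encMat_head n it t' Rest
            (((hv (it :: t') (by simp)).2) it (by simp)).1
          rw [htl] at hr'
          obtain ⟨q3, hm3, hr3⟩ := reach_cons_elim hr'
          have hrH : Reach (mach n) (Mode.H, c1) (encMat n ((it :: t') :: Rest)) q' := by
            rw [htl]
            exact reach_cons_iff.2 ⟨q3, hm3, hr3⟩
          refine ⟨q', hq1, by omega, ?_⟩
          show Reach (mach n) (Mode.W, c)
            (enc n r ++ Sym3.hash :: encMat n ((it :: t') :: Rest)) q'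
          exact reach_append.2 ⟨(m1, c1), hr1,
            reach_cons_iff.2 ⟨(Mode.H, c1), hstepH, hrH⟩⟩

/-! ### Forward lemmas, phase 2 -/

lemma fwd_S2_ones {n : ℕ} (a : ℕ) (c : Fin (n*n+1)) :
    Reach (mach n) (Mode.S2, c) (ones a) (Mode.S2, c) := by
  induction a with
  | zero => exact Reach.nil _
  | succ a ih =>
      rw [ones, List.replicate_succ]
      exact Reach.cons rfl ih

lemma fwd_W2_zeros {n : ℕ} (k : ℕ) (c : Fin (n*n+1)) :
    Reach (mach n) (Mode.W2, c) (zeros k) (Mode.W2, c) := by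
  induction k with
  | zero => exact Reach.nil _
  | succ k ih =>
      rw [zeros, List.replicate_succ]
      exact Reach.cons rfl ih

lemma fwd_D2_nohash {n : ℕ} : ∀ (w : List Sym3), Sym3.hash ∉ w → ∀ (c : Fin (n*n+1)),
    Reach (mach n) (Mode.D2, c) w (Mode.D2, c) := by
  intro w
  induction w with
  | nil => intro _ c; exact Reach.nil _
  | cons a t ih =>
      intro hh c
      have hstep : ((Mode.D2, c) : MQ n) ∈ step n (Mode.D2, c) a := by
        cases a
        · rfl
        · rfl
        · exact absurd (by simp) hh
      exact Reach.cons hstep (ih (fun hx => hh (by simp [hx])) c)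

lemma fwd_C2_ones {n : ℕ} : ∀ (a : ℕ) (c : Fin (n*n+1)), a ≤ c.val →
    ∃ q' : MQ n, q'.1 = Mode.C2 ∧ q'.2.val = c.val - a ∧
      Reach (mach n) (Mode.C2, c) (ones a) q' := by
  intro a
  induction a with
  | zero => intro c _; exact ⟨(Mode.C2, c), rfl, rfl, Reach.nil _⟩
  | succ a ih =>
      intro c hb
      have hlt : 0 < c.val := by omega
      obtain ⟨q', h1, h2, hr⟩ := ih ⟨c.val - 1, by omega⟩ (by simp; omega)
      refine ⟨q', h1, by simp at h2; omega, ?_⟩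
      rw [ones, List.replicate_succ]
      exact Reach.cons (mem_dn_intro hlt) hr

lemma fwd_S2_zeros {n : ℕ} (k : ℕ) (c : Fin (n*n+1)) :
    ∃ q' : MQ n, (q' = (Mode.S2, c) ∨ q' = (Mode.W2, c)) ∧
      Reach (mach n) (Mode.S2, c) (zeros k) q' := by
  cases k with
  | zero => exact ⟨(Mode.S2, c), Or.inl rfl, Reach.nil _⟩
  | succ k =>
      refine ⟨(Mode.W2, c), Or.inr rfl, ?_⟩
      rw [zeros, List.replicate_succ]
      exact Reach.cons rfl (fwd_W2_zeros k c)

lemma fwd_C2_zeros {n : ℕ} (k : ℕ) (c : Fin (n*n+1)) :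
    ∃ q' : MQ n, (q'.1 = Mode.C2 ∨ q'.1 = Mode.D2) ∧ q'.2 = c ∧
      Reach (mach n) (Mode.C2, c) (zeros k) q' := by
  cases k with
  | zero => exact ⟨(Mode.C2, c), Or.inl rfl, rfl, Reach.nil _⟩
  | succ k =>
      refine ⟨(Mode.D2, c), Or.inr rfl, rfl, ?_⟩
      rw [zeros, List.replicate_succ]
      exact Reach.cons rfl (fwd_D2_nohash _ (hash_not_mem_zeros k) c)

lemma fwd_count_block2 {n : ℕ} (i : ℕ) (hi : 1 ≤ i) (c : Fin (n*n+1))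
    (hb : i ≤ c.val) :
    ∃ q' : MQ n, (q'.1 = Mode.C2 ∨ q'.1 = Mode.D2) ∧ q'.2.val = c.val - i ∧
      Reach (mach n) (Mode.W2, c) (block n i) q' := by
  obtain ⟨i', rfl⟩ : ∃ i', i = i' + 1 := ⟨i - 1, by omega⟩
  have hlt : 0 < c.val := by omega
  obtain ⟨qC, hC1, hC2, hrC⟩ := fwd_C2_ones i' (⟨c.val - 1, by omega⟩ : Fin (n*n+1)) (show i' ≤ c.val - 1 by omega)
  rcases qC with ⟨mC, c2⟩
  simp only at hC1 hC2
  subst hC1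
  obtain ⟨q', h1, h2, hrz⟩ := fwd_C2_zeros (n - (i' + 1)) c2
  refine ⟨q', h1, by rw [h2]; omega, ?_⟩
  show Reach (mach n) (Mode.W2, c) (ones (i' + 1) ++ zeros (n - (i' + 1))) q'
  rw [ones, List.replicate_succ]
  exact Reach.cons (Or.inl (mem_dn_intro hlt)) (reach_append.2 ⟨(Mode.C2, c2), hrC, hrz⟩)

lemma fwd_skip_block2 {n : ℕ} (i : ℕ) (hi : 1 ≤ i) (c : Fin (n*n+1)) :
    ∃ q' : MQ n, (q' = (Mode.S2, c) ∨ q' = (Mode.W2, c)) ∧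
      Reach (mach n) (Mode.W2, c) (block n i) q' := by
  obtain ⟨i', rfl⟩ : ∃ i', i = i' + 1 := ⟨i - 1, by omega⟩
  obtain ⟨q', h1, hrz⟩ := fwd_S2_zeros (n - (i' + 1)) c
  refine ⟨q', h1, ?_⟩
  show Reach (mach n) (Mode.W2, c) (ones (i' + 1) ++ zeros (n - (i' + 1))) q'
  rw [ones, List.replicate_succ]
  exact Reach.cons (Or.inr rfl) (reach_append.2 ⟨(Mode.S2, c), fwd_S2_ones i' c, hrz⟩)

lemma fwd_row2 {n : ℕ} : ∀ (r : List ℕ), (∀ i ∈ r, 1 ≤ i ∧ i ≤ n) →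
    ∀ a, a ∈ r → ∀ (c : Fin (n*n+1)), a ≤ c.val →
    ∃ q' : MQ n, (q'.1 = Mode.C2 ∨ q'.1 = Mode.D2) ∧ q'.2.val = c.val - a ∧
      Reach (mach n) (Mode.W2, c) (enc n r) q'
  | [] => by intro _ a ha; exact absurd ha (by simp)
  | [i] => by
      intro hv a ha c hb
      have : a = i := by simpa using ha
      subst this
      exact fwd_count_block2 a (hv a (by simp)).1 c hb
  | i :: j :: rest => by
      intro hv a ha c hb
      rcases List.mem_cons.1 ha with rfl | ha'
      · obtain ⟨q1, h1, h2, hr1⟩ := fwd_count_block2 a (hv a (by simp)).1 c hb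
        rcases q1 with ⟨m1, c1⟩
        simp only at h1 h2
        have hstep : ((Mode.D2, c1) : MQ n) ∈ step n (m1, c1) Sym3.zero := by
          rcases h1 with rfl | rfl <;> rfl
        refine ⟨(Mode.D2, c1), Or.inr rfl, h2, ?_⟩
        show Reach (mach n) (Mode.W2, c) (block n a ++ Sym3.zero :: enc n (j :: rest)) _
        exact reach_append.2 ⟨(m1, c1), hr1,
          reach_cons_iff.2 ⟨(Mode.D2, c1), hstep,
            fwd_D2_nohash _ (hash_not_mem_enc n (j :: rest)) c1⟩⟩
      · obtain ⟨q1, h1, hr1⟩ := fwd_skip_block2 i (hv i (by simp)).1 c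
        obtain ⟨q', hq1, hq2, hr'⟩ := fwd_row2 (j :: rest)
          (fun x hx => hv x (List.mem_cons_of_mem _ hx)) a ha' c hb
        have hstep : ((Mode.W2, c) : MQ n) ∈ step n q1 Sym3.zero := by
          rcases h1 with rfl | rfl <;> rfl
        refine ⟨q', hq1, hq2, ?_⟩
        show Reach (mach n) (Mode.W2, c) (block n i ++ Sym3.zero :: enc n (j :: rest)) q'
        exact reach_append.2 ⟨q1, hr1, reach_cons_iff.2 ⟨(Mode.W2, c), hstep, hr'⟩⟩

lemma fwd_mat2 {n : ℕ} (hn : 1 ≤ n) : ∀ (R : List (List ℕ)), (∀ r ∈ R, ValidList n n r) →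
    ∀ s, SelSum R s → R ≠ [] → ∀ (c : Fin (n*n+1)), s ≤ c.val →
    ∃ q' : MQ n, (q'.1 = Mode.C2 ∨ q'.1 = Mode.D2) ∧ q'.2.val = c.val - s ∧
      Reach (mach n) (Mode.W2, c) (encMat n R) q'
  | [] => by intro _ s _ hne; exact absurd rfl hne
  | [r] => by
      intro hv s hs _ c hb
      cases hs with
      | @cons a _ _ s' ha hs' =>
          have hz : s' = 0 := selSum_nil_eq hs'
          subst hz
          obtain ⟨q', h1, h2, hr⟩ := fwd_row2 r (hv r (by simp)).2 a ha c (by omega)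
          exact ⟨q', h1, by omega, hr⟩
  | r :: t :: Rest => by
      intro hv s hs _ c hb
      cases hs with
      | @cons a _ _ s' ha hs' =>
          obtain ⟨q1, h1, h2, hr1⟩ := fwd_row2 r (hv r (by simp)).2 a ha c (by omega)
          rcases q1 with ⟨m1, c1⟩
          simp only at h1 h2
          have hstepH : ((Mode.H2, c1) : MQ n) ∈ step n (m1, c1) Sym3.hash := by
            rcases h1 with rfl | rfl <;> rfl
          obtain ⟨it, t', rfl⟩ : ∃ it t', t = it :: t' := by
            have hlen := (hv t (by simp)).1
            cases t with
            | nil => exfalso; simp at hlen; omega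
            | cons it t' => exact ⟨it, t', rfl⟩
          obtain ⟨q', hq1, hq2, hr'⟩ := fwd_mat2 hn ((it :: t') :: Rest)
            (fun x hx => hv x (List.mem_cons_of_mem _ hx)) s' hs' (by simp) c1
            (by omega)
          obtain ⟨tl, htl⟩ := encMat_head n it t' Rest
            (((hv (it :: t') (by simp)).2) it (by simp)).1
          rw [htl] at hr'
          obtain ⟨q3, hm3, hr3⟩ := reach_cons_elim hr'
          have hrH : Reach (mach n) (Mode.H2, c1) (encMat n ((it :: t') :: Rest)) q' := by
            rw [htl]
            exact reach_cons_iff.2 ⟨q3, hm3, hr3⟩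
          refine ⟨q', hq1, by omega, ?_⟩
          show Reach (mach n) (Mode.W2, c)
            (enc n r ++ Sym3.hash :: encMat n ((it :: t') :: Rest)) q'
          exact reach_append.2 ⟨(m1, c1), hr1,
            reach_cons_iff.2 ⟨(Mode.H2, c1), hstepH, hrH⟩⟩

end L2pf

/-- The family `L₂` belongs to `1N`. -/
theorem L2_mem_oneN : L2fam ∈ oneN := by
  show ∃ M : ℕ → OneNFA Sym3, PolySize1 M ∧ Solves1 M L2prob
  refine ⟨fun n => if n = 0 then L2pf.triv else L2pf.mach n, ?_, ?_⟩
  · -- polynomial size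
    refine ⟨Polynomial.C 11 * (Polynomial.X * Polynomial.X + 1), ?_⟩
    intro n
    have heval : (Polynomial.C 11 * (Polynomial.X * Polynomial.X + 1) :
        Polynomial ℕ).eval n = 11 * (n * n + 1) := by simp
    by_cases hn : n = 0
    · subst hn
      show L2pf.triv.sc ≤ _
      have h1 : L2pf.triv.sc = 1 := rfl
      rw [h1, heval]
      omega
    · simp only [if_neg hn]
      have hcard : Fintype.card L2pf.Mode = 11 := rfl
      have h1 : (L2pf.mach n).sc = Fintype.card L2pf.Mode * (n * n + 1) := by
        show Fintype.card (L2pf.Mode × Fin (n * n + 1)) = _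
        rw [Fintype.card_prod, Fintype.card_fin]
      rw [h1, hcard, heval]
  · -- solves L₂
    intro n
    by_cases hn : n = 0
    · subst hn
      simp only [if_pos rfl]
      constructor
      · intro x _
        exact L2pf.triv_accepts x
      · rintro x ⟨R, R', hR, hR', hne, rfl⟩
        intro _
        have hR0 : R = [] := List.length_eq_zero_iff.1 hR.1
        have hR'0 : R' = [] := List.length_eq_zero_iff.1 hR'.1
        subst hR0; subst hR'0
        exact hne 0 0 SelSum.nil SelSum.nil rfl
    · simp only [if_neg hn]
      have hn1 : 1 ≤ n := Nat.one_le_iff_ne_zero.2 hn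
      constructor
      · -- positive instances are accepted
        rintro x ⟨R, R', hR, hR', ⟨s, hs, hs'⟩, rfl⟩
        rw [L2pf.accepts_iff_reach]
        have hsle : s ≤ n * n := by
          have := L2pf.selSum_le n hs (fun r hr i hi => ((hR.2 r hr).2 i hi).2)
          rw [hR.1] at this
          exact this
        have hRne : R ≠ [] := by
          intro h
          rw [h] at hR
          have := hR.1
          simp at this
          omega
        have hR'ne : R' ≠ [] := by
          intro h
          rw [h] at hR'
          have := hR'.1
          simp at this
          omega
        obtain ⟨q1, h1, h2, hr1⟩ := L2pf.fwd_mat hn1 R hR.2 s hs hRne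
          (⟨0, by omega⟩ : Fin (n*n+1)) (show 0 + s ≤ n * n by omega)
        rcases q1 with ⟨m1, c1⟩
        simp only at h1
        have h2' : c1.val = 0 + s := h2
        have hstepH : ((L2pf.Mode.H, c1) : L2pf.MQ n) ∈ L2pf.step n (m1, c1) Sym3.hash := by
          rcases h1 with rfl | rfl <;> rfl
        obtain ⟨q', hq1, hq2, hr2⟩ := L2pf.fwd_mat2 hn1 R' hR'.2 s hs' hR'ne c1 (by omega)
        refine ⟨q', ⟨hq1, by omega⟩, ?_⟩
        show L2pf.Reach (L2pf.mach n) (L2pf.Mode.W, (⟨0, by omega⟩ : Fin (n*n+1)))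
          (encMat n R ++ Sym3.hash :: Sym3.hash :: encMat n R') q'
        exact L2pf.reach_append.2 ⟨(m1, c1), hr1,
          L2pf.reach_cons_iff.2 ⟨(L2pf.Mode.H, c1), hstepH,
            L2pf.reach_cons_iff.2 ⟨(L2pf.Mode.W2, c1), rfl, hr2⟩⟩⟩
      · -- negative instances are rejected
        rintro x ⟨R, R', hR, hR', hne, rfl⟩ hacc
        rw [L2pf.accepts_iff_reach] at hacc
        obtain ⟨qe, hqe, hr⟩ := hacc
        obtain ⟨q1, h1, h2⟩ := L2pf.reach_append.1 hr
        have h1' : L2pf.Reach (L2pf.mach n) (L2pf.Mode.W, (⟨0, by omega⟩ : Fin (n*n+1)))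
            (encMat n R) q1 := h1
        rcases L2pf.reach_W_encMat hn1 R hR.2 _ q1 h1' with hX | hW | hS | ⟨s, hsel, hCD, hval⟩
        · rcases q1 with ⟨m1, c1⟩
          simp only at hX
          subst hX
          have hx := L2pf.reach_X _ _ h2
          rw [hx] at hqe
          rcases hqe with ⟨h | h, -⟩ <;> exact L2pf.Mode.noConfusion h
        · rcases q1 with ⟨m1, c1⟩
          simp only at hW
          subst hW
          obtain ⟨q2, hm, hr2⟩ := L2pf.reach_cons_elim h2
          have hq : q2 = (L2pf.Mode.X, c1) := hm
          subst hq
          obtain ⟨q3, hm3, hr3⟩ := L2pf.reach_cons_elim hr2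
          have hq3 : q3 = (L2pf.Mode.X, c1) := hm3
          subst hq3
          have hx := L2pf.reach_X _ _ hr3
          rw [hx] at hqe
          rcases hqe with ⟨h | h, -⟩ <;> exact L2pf.Mode.noConfusion h
        · rcases q1 with ⟨m1, c1⟩
          simp only at hS
          subst hS
          obtain ⟨q2, hm, hr2⟩ := L2pf.reach_cons_elim h2
          have hq : q2 = (L2pf.Mode.X, c1) := hm
          subst hq
          obtain ⟨q3, hm3, hr3⟩ := L2pf.reach_cons_elim hr2
          have hq3 : q3 = (L2pf.Mode.X, c1) := hm3
          subst hq3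
          have hx := L2pf.reach_X _ _ hr3
          rw [hx] at hqe
          rcases hqe with ⟨h | h, -⟩ <;> exact L2pf.Mode.noConfusion h
        · rcases q1 with ⟨m1, c1⟩
          simp only at hCD
          have hval' : c1.val = 0 + s := hval
          obtain ⟨q2, hm, hr2⟩ := L2pf.reach_cons_elim h2
          have hq2 : q2 = (L2pf.Mode.H, c1) := by
            rcases hCD with h | h <;> (subst h; exact hm)
          subst hq2
          obtain ⟨q3, hm3, hr3⟩ := L2pf.reach_cons_elim hr2
          have hq3 : q3 = (L2pf.Mode.W2, c1) := hm3
          subst hq3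
          rcases L2pf.reach_W2_encMat hn1 R' hR'.2 c1 qe hr3
            with hX | hW | hS | ⟨s', hsel', hle, hCD', hvale⟩
          · rcases qe with ⟨me, ce⟩
            simp only at hX
            subst hX
            rcases hqe with ⟨h | h, -⟩ <;> exact L2pf.Mode.noConfusion h
          · rcases hqe with ⟨h | h, -⟩ <;> (rw [hW] at h; exact L2pf.Mode.noConfusion h)
          · rcases hqe with ⟨h | h, -⟩ <;> (rw [hS] at h; exact L2pf.Mode.noConfusion h)
          · have hz : qe.2.val = 0 := hqe.2
            exact hne s s' hsel hsel' (by omega)
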